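/- arXiv:1801.02278 — 6 statements merged into one kernel-verified Lean document; each statement's English description precedes it below -/
import Mathlib

section
/- Let v = (n_1,…,n_k) be a non-decreasing sequence of naturals of length k, and let X_v^max be defined via the functions f_j(0) = n_j and f_j(m) = n_k + m for m ≥ 1, by X_v^max = { (f_1(m_1),…,f_k(m_k)) : m_1 ≤ … ≤ m_k naturals }. Then a non-decreasing sequence w = (m_1,…,m_k) belongs to X_v^max if and only if either m_1 > n_k, or there exists 1 ≤ i ≤ k such that (m_1,…,m_i) = (n_1,…,n_i) and, if i < k, then m_{i+1} > n_k. -/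
/-- Non-decreasing list of naturals. -/
abbrev NonDec (l : List ℕ) : Prop := l.Chain' (· ≤ ·)

/-- The order `≺` on nondecreasing sequences: the empty sequence is minimal;
nonempty sequences are compared by last entry, with lexicographic tie-breaking. -/
def prec (s t : List ℕ) : Prop :=
  (s = [] ∧ t ≠ []) ∨
  (s ≠ [] ∧ t ≠ [] ∧ (s.getLast! < t.getLast! ∨
    (s.getLast! = t.getLast! ∧ List.Lex (· < ·) s t)))

/-- The map `X̂_v`: `(m_1,…,m_l) ↦ (f_1(m_1),…,f_l(m_l))` where
`f_j(0) = n_j` and `f_j(m) = n_k + m` for `m ≥ 1`, `v = (n_1,…,n_k)`. -/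
def Xhat (v s : List ℕ) : List ℕ :=
  List.zipWith (fun a b => if b = 0 then a else v.getLast! + b) (v.take s.length) s

/-- The set `X_v^max`, described by its characterization:
`w ∈ X_v^max` iff `w` is nondecreasing of the same length as `v` and either
`w_1 > n_k`, or there is `1 ≤ i ≤ k` with `(w_1,…,w_i) = (n_1,…,n_i)` and
(if `i < k`) `w_{i+1} > n_k`. -/
def XmaxSet (v : List ℕ) : Set (List ℕ) :=
  { w | w.length = v.length ∧ NonDec w ∧
    (v.getLast! < w.headI ∨
      ∃ i, 1 ≤ i ∧ i ≤ v.length ∧ w.take i = v.take i ∧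
        (i < v.length → v.getLast! < w.getD i 0)) }

lemma getD_mono {l : List ℕ} (h : NonDec l) {a b : ℕ} (hab : a ≤ b) (hb : b < l.length) :
    l.getD a 0 ≤ l.getD b 0 := by
  rcases eq_or_lt_of_le hab with rfl | hab'
  · exact le_refl _
  · have hp := List.pairwise_iff_getElem.mp (List.isChain_iff_pairwise.mp h)
    rw [List.getD_eq_getElem _ _ (by omega), List.getD_eq_getElem _ _ hb]
    exact hp a b (by omega) hb hab'

lemma nondec_of_getD {l : List ℕ} (h : ∀ j, j + 1 < l.length → l.getD j 0 ≤ l.getD (j+1) 0) :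
    NonDec l := by
  apply List.isChain_iff_getElem.mpr
  intro i hi
  have := h i (by omega)
  rwa [List.getD_eq_getElem _ _ (by omega), List.getD_eq_getElem _ _ (by omega)] at this

lemma headI_eq_getD (l : List ℕ) : l.headI = l.getD 0 0 := by
  cases l <;> rfl

lemma getLast!_eq_getD (l : List ℕ) (h : l ≠ []) : l.getLast! = l.getD (l.length - 1) 0 := by
  have hl : 0 < l.length := List.length_pos_iff.mpr h
  have h1 : l.getLast? = some (l[l.length - 1]'(by omega)) := by
    rw [List.getLast?_eq_getElem?]
    exact List.getElem?_eq_getElem (by omega)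
  rw [List.getLast!_of_getLast? h1, List.getD_eq_getElem _ _ (by omega)]

lemma Xhat_length (v m : List ℕ) (h : m.length = v.length) :
    (Xhat v m).length = v.length := by
  simp [Xhat, h]

lemma Xhat_getD (v m : List ℕ) (h : m.length = v.length) {j : ℕ} (hj : j < v.length) :
    (Xhat v m).getD j 0 =
      if m.getD j 0 = 0 then v.getD j 0 else v.getLast! + m.getD j 0 := by
  have hlen : (Xhat v m).length = v.length := Xhat_length v m h
  rw [List.getD_eq_getElem _ _ (by omega)]
  unfold Xhat
  rw [List.getElem_zipWith, List.getElem_take,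
    List.getD_eq_getElem v _ hj, List.getD_eq_getElem m _ (by omega)]

/-- characterization of the members of `X_v^max`. -/
theorem mem_XmaxSet_iff (k : ℕ) (hk : 2 ≤ k) (v w : List ℕ)
    (hv : NonDec v) (hvl : v.length = k)
    (hw : NonDec w) (hwl : w.length = k) :
    (∃ m : List ℕ, NonDec m ∧ m.length = k ∧ w = Xhat v m) ↔ w ∈ XmaxSet v := by
  have hv0 : v ≠ [] := by intro h; rw [h] at hvl; simp at hvl; omega
  constructor
  · rintro ⟨m, hm, hml, hwm⟩
    refine ⟨by omega, hw, ?_⟩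
    have hwj : ∀ j < k, w.getD j 0 =
        if m.getD j 0 = 0 then v.getD j 0 else v.getLast! + m.getD j 0 := by
      intro j hj
      rw [hwm]; exact Xhat_getD v m (by omega) (by omega)
    by_cases hall : ∀ j < k, m.getD j 0 = 0
    · right
      have hwv : w = v := by
        apply List.ext_getElem (by omega)
        intro j h1 h2
        have e : w.getD j 0 = v.getD j 0 := by
          rw [hwj j (by omega), if_pos (hall j (by omega))]
        rw [← List.getD_eq_getElem w 0 h1, ← List.getD_eq_getElem v 0 h2, e]
      exact ⟨k, by omega, by omega, by rw [hwv], fun h => absurd h (by omega)⟩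
    · push_neg at hall
      obtain ⟨j0, hj0k, hj0⟩ := hall
      have hex : ∃ j, m.getD j 0 ≠ 0 := ⟨j0, hj0⟩
      set i := Nat.find hex with hidef
      have hispec : m.getD i 0 ≠ 0 := Nat.find_spec hex
      have himin : ∀ j < i, m.getD j 0 = 0 := by
        intro j hj
        have := Nat.find_min hex hj
        simpa using this
      have hik : i < k := lt_of_le_of_lt (Nat.find_min' hex hj0) hj0k
      have hwi : w.getD i 0 = v.getLast! + m.getD i 0 := by
        rw [hwj i hik, if_neg hispec]
      rcases Nat.eq_zero_or_pos i with h0 | hpos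
      · left
        rw [h0] at hwi hispec
        rw [headI_eq_getD, hwi]
        omega
      · right
        refine ⟨i, hpos, by omega, ?_, fun _ => by rw [hwi]; omega⟩
        apply List.ext_getElem (by rw [List.length_take, List.length_take]; omega)
        intro j h1 h2
        have hji : j < i := by rw [List.length_take] at h1; omega
        rw [List.getElem_take, List.getElem_take]
        have e : w.getD j 0 = v.getD j 0 := by
          rw [hwj j (by omega), if_pos (himin j hji)]
        rw [← List.getD_eq_getElem w 0 (by omega), ← List.getD_eq_getElem v 0 (by omega), e]
  · rintro ⟨hlen, -, hcase⟩
    obtain ⟨i, hik, hpre, hbig⟩ :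
        ∃ i, i ≤ k ∧ (∀ j < i, w.getD j 0 = v.getD j 0) ∧
          (∀ j, i ≤ j → j < k → v.getLast! < w.getD j 0) := by
      rcases hcase with hh | ⟨i, h1, h2, ht, hnx⟩
      · refine ⟨0, by omega, fun j hj => absurd hj (by omega), fun j _ hj => ?_⟩
        rw [headI_eq_getD] at hh
        exact lt_of_lt_of_le hh (getD_mono hw (Nat.zero_le j) (by omega))
      · refine ⟨i, by omega, ?_, ?_⟩
        · intro j hj
          have e : (w.take i).getD j 0 = (v.take i).getD j 0 := by rw [ht]
          have hjw : j < (w.take i).length := by rw [List.length_take]; omega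
          have hjv : j < (v.take i).length := by rw [List.length_take]; omega
          rw [List.getD_eq_getElem (w.take i) 0 hjw, List.getD_eq_getElem (v.take i) 0 hjv,
            List.getElem_take, List.getElem_take] at e
          rw [List.getD_eq_getElem w 0 (by omega), List.getD_eq_getElem v 0 (by omega)]
          exact e
        · intro j hij hj
          have hi := hnx (by omega)
          exact lt_of_lt_of_le hi (getD_mono hw hij (by omega))
    set g : ℕ → ℕ := fun j => if j < i then 0 else w.getD j 0 - v.getLast! with hg
    refine ⟨(List.range k).map g, ?_, by simp, ?_⟩
    · have hmj : ∀ j < k, ((List.range k).map g).getD j 0 = g j := by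
        intro j hj
        rw [List.getD_eq_getElem _ _ (by simpa using hj)]
        simp
      apply nondec_of_getD
      intro j hj
      simp only [List.length_map, List.length_range] at hj
      rw [hmj j (by omega), hmj (j+1) (by omega)]
      by_cases h2 : j + 1 < i
      · simp [hg, h2, show j < i by omega]
      · by_cases h3 : j < i
        · simp [hg, h3]
        · simp only [hg, if_neg h2, if_neg h3]
          exact Nat.sub_le_sub_right (getD_mono hw (by omega) (by omega)) v.getLast!
    · apply List.ext_getElem (by rw [hwl, Xhat_length v _ (by simp; omega)]; omega)
      intro j h1 h2
      rw [← List.getD_eq_getElem w 0 h1,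
        ← List.getD_eq_getElem _ 0 h2,
        Xhat_getD v _ (by simp; omega) (by omega)]
      have hmj : ((List.range k).map g).getD j 0 = g j := by
        rw [List.getD_eq_getElem _ _ (by simp; omega)]
        simp
      rw [hmj]
      by_cases h3 : j < i
      · simp only [hg, if_pos h3, if_pos rfl]
        exact hpre j h3
      · have hb := hbig j (by omega) (by omega)
        simp only [hg, if_neg h3]
        rw [if_neg (by omega)]
        omega
end

section
/- If w ∈ X_v^max, then X_w^max ⊆ X_v^max. -/
lemma getLast!_eq_getElem' (l : List ℕ) (h : l ≠ []) :
    l.getLast! = l[l.length - 1]'(by simp [List.length_pos_iff.2 h]) := by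
  cases l with
  | nil => simp at h
  | cons a t =>
    show (a::t).getLast (by simp) = _
    rw [List.getLast_eq_getElem]

lemma nd_le (l : List ℕ) (h : NonDec l) {i j : ℕ} (hij : i ≤ j) (hj : j < l.length) :
    l[i]'(lt_of_le_of_lt hij hj) ≤ l[j] := by
  rcases eq_or_lt_of_le hij with rfl | hlt
  · exact le_refl _
  · exact List.pairwise_iff_getElem.mp (List.isChain_iff_pairwise.mp h) i j _ hj hlt

lemma take_eq_getD (u w : List ℕ) (j i : ℕ) (h : u.take j = w.take j) (hi : i < j) :
    u.getD i 0 = w.getD i 0 := by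
  have h2 : u[i]? = w[i]? := by
    have := congrArg (fun l => l[i]?) h
    simpa [List.getElem?_take, hi] using this
  simp [List.getD_eq_getElem?_getD, h2]

lemma key_last (v w : List ℕ) (hw : w ∈ XmaxSet v) (hne : v ≠ []) :
    v.getLast! ≤ w.getLast! := by
  obtain ⟨hlen, hnd, hc⟩ := hw
  have hwne : w ≠ [] := by
    intro h; subst h; simp at hlen; exact hne (List.length_eq_zero_iff.mp hlen.symm)
  have hwpos : 0 < w.length := List.length_pos_iff.2 hwne
  rcases hc with h | ⟨i, hi1, hik, htake, hlt⟩
  · calc v.getLast! ≤ w.headI := le_of_lt h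
      _ = w.getD 0 0 := headI_eq_getD w
      _ = w[0] := List.getD_eq_getElem w 0 hwpos
      _ ≤ w[w.length - 1] := nd_le w hnd (Nat.zero_le _) (by omega)
      _ = w.getLast! := (getLast!_eq_getElem' w hwne).symm
  · rcases eq_or_lt_of_le hik with heq | hi
    · -- i = v.length, so w = v
      have : w = v := by
        rw [heq] at htake
        rw [← List.take_length (l := w), ← List.take_length (l := v), hlen, htake]
      rw [this]
    · refine le_of_lt ?_
      have h1 : v.getLast! < w.getD i 0 := hlt hi
      have hiw : i < w.length := by omega
      calc v.getLast! < w.getD i 0 := h1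
        _ = w[i] := List.getD_eq_getElem w 0 hiw
        _ ≤ w[w.length - 1] := nd_le w hnd (by omega) (by omega)
        _ = w.getLast! := (getLast!_eq_getElem' w hwne).symm


/-- if `w ∈ X_v^max`, then `X_w^max ⊆ X_v^max`. -/
theorem XmaxSet_subset (k : ℕ) (v w : List ℕ)
    (hv : NonDec v) (hvl : v.length = k)
    (hw : w ∈ XmaxSet v) :
    XmaxSet w ⊆ XmaxSet v := by
  rintro u ⟨hul, hund, huc⟩
  obtain ⟨hwl, hwnd, hwc⟩ := hw
  rcases eq_or_ne v [] with rfl | hvne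
  · have hw0 : w = [] := List.length_eq_zero_iff.mp (by simpa using hwl)
    subst hw0
    rcases hwc with h | ⟨i, h1, h2, _⟩
    · simp at h
    · simp at h2; omega
  have hwne : w ≠ [] := by
    intro h; subst h; simp at hwl; exact hvne (List.length_eq_zero_iff.mp hwl.symm)
  have hlast : v.getLast! ≤ w.getLast! := key_last v w ⟨hwl, hwnd, hwc⟩ hvne
  refine ⟨hul.trans hwl, hund, ?_⟩
  rcases huc with h | ⟨j, hj1, hjk, hjtake, hjlt⟩
  · exact Or.inl (lt_of_le_of_lt hlast h)
  · -- u agrees with w on first j entries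
    have hhead : u.headI = w.headI := by
      rw [headI_eq_getD, headI_eq_getD]
      exact take_eq_getD u w j 0 hjtake (by omega)
    rcases hwc with h | ⟨i, hi1, hik, hitake, hilt⟩
    · exact Or.inl (hhead ▸ h)
    · refine Or.inr ⟨min i j, le_min hi1 hj1, le_trans (min_le_left _ _) hik, ?_, ?_⟩
      · -- u.take (min i j) = v.take (min i j)
        have e1 : ∀ l : List ℕ, (l.take j).take (min i j) = l.take (min i j) := fun l => by
          rw [List.take_take, min_eq_left (min_le_right i j)]
        have e2 : ∀ l : List ℕ, (l.take i).take (min i j) = l.take (min i j) := fun l => by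
          rw [List.take_take, min_eq_left (min_le_left i j)]
        calc u.take (min i j) = (u.take j).take (min i j) := (e1 u).symm
            _ = (w.take j).take (min i j) := by rw [hjtake]
            _ = w.take (min i j) := e1 w
            _ = (w.take i).take (min i j) := (e2 w).symm
            _ = (v.take i).take (min i j) := by rw [hitake]
            _ = v.take (min i j) := e2 v
      · intro hm
        rcases le_or_gt j i with hji | hij
        · -- min = j; v.last ≤ w.last < u[j]
          rw [min_eq_right hji] at hm ⊢
          exact lt_of_le_of_lt hlast (hjlt (by omega))
        · -- min = i < j; u[i] = w[i] > v.last
          rw [min_eq_left hij.le] at hm ⊢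
          rw [take_eq_getD u w j i hjtake hij]
          exact hilt hm
end

section
/- Let v ∈ ω^{[k]} and let s_1 ≺ s_2 ≺ … ≺ s_N be elements of ω^{≤k} of equal length strictly less than k with s_N ≺ v. Then there is at most one index i ≤ N such that X_v^max ∩ τ^k[s_i] ≠ ∅, where τ^k[s] = { w ∈ ω^{[k]} : s is an initial segment of w }. -/
/-- The tree generated by `s`: all `w ∈ ω^{[k]}` having `s` as an initial segment. -/
def tau (k : ℕ) (s : List ℕ) : Set (List ℕ) :=
  { w | w.length = k ∧ NonDec w ∧ s <+: w }

lemma getLast!_eq_getLast (l : List ℕ) (h : l ≠ []) : l.getLast! = l.getLast h := by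
  cases l with
  | nil => simp at h
  | cons a as => rfl

lemma le_getLast!_of_nondec {l : List ℕ} (h : NonDec l) {a : ℕ} (ha : a ∈ l) :
    a ≤ l.getLast! := by
  have hne : l ≠ [] := List.ne_nil_of_mem ha
  rw [getLast!_eq_getLast l hne]
  obtain ⟨i, rfl⟩ := List.mem_iff_get.mp ha
  have hs : l.Pairwise (·≤·) := List.isChain_iff_pairwise.mp h
  have hlast : l.getLast hne = l.get ⟨l.length - 1, by have := List.length_pos_iff.mpr hne; omega⟩ :=
    by rw [List.getLast_eq_getElem hne]; rfl
  rw [hlast]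
  exact hs.rel_get_of_le (by simp [Fin.le_def]; omega)

lemma prec_getLast!_le {a b : List ℕ} (h : prec a b) : a.getLast! ≤ b.getLast! := by
  rcases h with ⟨ha, _⟩ | ⟨_, _, h | ⟨h, _⟩⟩
  · subst ha; exact Nat.zero_le _
  · exact h.le
  · exact h.le

lemma prec_irrefl (t : List ℕ) : ¬ prec t t := by
  rintro (⟨h1, h2⟩ | ⟨_, _, h | ⟨_, hlex⟩⟩)
  · exact h2 h1
  · exact lt_irrefl _ h
  · exact asymm_of (List.Lex (·<·)) hlex hlex

lemma key_take {v t : List ℕ} {k l : ℕ} (hvl : v.length = k) (hl : l < k)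
    (htl : t.length = l) (htlast : t.getLast! ≤ v.getLast!) (hndt : NonDec t)
    {w : List ℕ} (hw : w ∈ XmaxSet v) (hwt : w ∈ tau k t) : t = v.take l := by
  obtain ⟨hwk, hndw, hcase⟩ := hw
  obtain ⟨_, _, hpre⟩ := hwt
  have htake : t = w.take l := htl ▸ List.prefix_iff_eq_take.mp hpre
  rcases Nat.eq_zero_or_pos l with hl0 | hl1
  · subst hl0; exact List.length_eq_zero_iff.mp htl
  have hwlen : w.length = k := by rw [hwk, hvl]
  subst htake
  have helem : ∀ m : ℕ, (hm : m < l) → w[m]'(by omega) ≤ v.getLast! := by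
    intro m hm
    have hlt : m < (w.take l).length := by simp [hwlen]; omega
    have hmem := List.getElem_mem hlt
    rw [List.getElem_take] at hmem
    exact le_trans (le_getLast!_of_nondec hndt hmem) htlast
  rcases hcase with hhead | ⟨i, hi1, hik, hti, hlast⟩
  · -- w.headI > v.getLast!, contradiction
    exfalso
    have hwne : w ≠ [] := by intro h; rw [h] at hwlen; simp at hwlen; omega
    have : w.headI = w[0]'(by have := List.length_pos_iff.mpr hwne; omega) := by
      cases w with
      | nil => exact absurd rfl hwne
      | cons a as => rfl
    rw [this] at hhead
    exact absurd (helem 0 hl1) (not_le.mpr hhead)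
  · rcases lt_or_ge i l with hil | hli
    · exfalso
      have hiv : i < v.length := by omega
      have := hlast hiv
      rw [List.getD_eq_getElem w 0 (by omega : i < w.length)] at this
      exact absurd (helem i hil) (not_le.mpr this)
    · have h1 : w.take l = (w.take i).take l := by rw [List.take_take, min_eq_left hli]
      have h2 : v.take l = (v.take i).take l := by rw [List.take_take, min_eq_left hli]
      rw [h1, h2, hti]

/-- for `s_1 ≺ ⋯ ≺ s_N` of equal length `< k` with `s_N ≺ v`,
at most one `i` satisfies `X_v^max ∩ τ^k[s_i] ≠ ∅`. -/
theorem XmaxSet_meets_at_most_one_tau (k N : ℕ) (hk : 1 ≤ k)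
    (s : Fin (N + 1) → List ℕ) (hnd : ∀ i, NonDec (s i))
    (l : ℕ) (hl : l < k) (hlen : ∀ i, (s i).length = l)
    (hmono : ∀ i j, i < j → prec (s i) (s j))
    (v : List ℕ) (hv : NonDec v) (hvl : v.length = k)
    (hsv : prec (s (Fin.last N)) v) :
    ∀ i j, (XmaxSet v ∩ tau k (s i)).Nonempty →
      (XmaxSet v ∩ tau k (s j)).Nonempty → i = j := by
  have hle : ∀ i, (s i).getLast! ≤ v.getLast! := by
    intro i
    rcases eq_or_lt_of_le (Fin.le_last i) with h | h
    · rw [h]; exact prec_getLast!_le hsv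
    · exact le_trans (prec_getLast!_le (hmono i (Fin.last N) h)) (prec_getLast!_le hsv)
  have key : ∀ i, (XmaxSet v ∩ tau k (s i)).Nonempty → s i = v.take l := by
    rintro i ⟨w, hw, hwt⟩
    exact key_take hvl hl (hlen i) (hle i) (hnd i) hw hwt
  intro i j hi hj
  by_contra hne
  have hij : s i = s j := (key i hi).trans (key j hj).symm
  rcases lt_or_gt_of_ne hne with h | h
  · exact prec_irrefl (s j) (hij ▸ hmono i j h)
  · exact prec_irrefl (s i) (hij ▸ hmono j i h)
end

section
/- For every n ∈ ℕ and x ∈ c_00(ω^{[k]}), the implicit norm |x|_n equals the dual description |x|*_n = max{ f(x) : f ∈ K_n }, where K_0 = {±e_v* : v ∈ ω^{[k]}} and K_{n+1} = K_n ∪ { θ(f_1+…+f_m) : m ≤ d, f_i ∈ K_n with (supp f_i)_{i=1}^m almost admissible }. -/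
/-- An `E_k`-tree: a map on `ω^{≤k}` sending nondecreasing sequences of length `≤ k`
to nondecreasing sequences of the same length, preserving `≺` and initial segments. -/
def IsEkTree (k : ℕ) (X : List ℕ → List ℕ) : Prop :=
  (∀ s, NonDec s → s.length ≤ k → NonDec (X s) ∧ (X s).length = s.length) ∧
  (∀ s t, NonDec s → NonDec t → s.length ≤ k → t.length ≤ k →
    (prec s t → prec (X s) (X t)) ∧ (s <+: t → X s <+: X t))

/-- `E ∈ AR^k`: `E` is a finite `≺`-initial segment of the restriction to `ω^{[k]}`
of some `E_k`-tree. -/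
def memAR (k : ℕ) (E : Finset (List ℕ)) : Prop :=
  ∃ X : List ℕ → List ℕ, IsEkTree k X ∧
    (∀ e ∈ E, ∃ s, NonDec s ∧ s.length = k ∧ e = X s) ∧
    (∀ s, NonDec s → s.length = k → ∀ e ∈ E, prec (X s) e → X s ∈ E)

/-- `ω^{[k]}`: nondecreasing sequences of naturals of length exactly `k`. -/
abbrev Vec (k : ℕ) := {l : List ℕ // NonDec l ∧ l.length = k}

/-- Restriction `Ex` of a finitely supported vector to a set of coordinates. -/
noncomputable def restrict {k : ℕ} (E : Finset (Vec k)) (x : Vec k →₀ ℝ) : Vec k →₀ ℝ :=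
  x.filter (fun v => v ∈ E)

/-- `A < B`: every element of `A` is `≺`-below every element of `B`. -/
def Successive {k : ℕ} (A B : Finset (Vec k)) : Prop :=
  ∀ a ∈ A, ∀ b ∈ B, prec a.1 b.1

/-- Membership in `AR^k` for finite sets of elements of `ω^{[k]}`. -/
def memARV (k : ℕ) (E : Finset (Vec k)) : Prop :=
  memAR k (E.image Subtype.val)

/-- A `d`-admissible sequence: at most `d` many `≺`-successive members of `AR^k`. -/
def Admissible (k d : ℕ) {m : ℕ} (E : Fin m → Finset (Vec k)) : Prop :=
  m ≤ d ∧ (∀ i, memARV k (E i)) ∧ ∀ i j, i < j → Successive (E i) (E j)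

/-- The nondecreasing sequence of norms `|x|_j` defining the Tsirelson-type norm:
`|x|_0 = max |x_v|`, and `|x|_{j+1}` is the max of `|x|_j` and
`θ ∑ |E_i x|_j` over admissible sequences `(E_i)_{i=1}^m`, `1 ≤ m ≤ d`. -/
noncomputable def normSeq (k d : ℕ) (θ : ℝ) : ℕ → (Vec k →₀ ℝ) → ℝ
  | 0, x => ⨆ v, |x v|
  | j + 1, x => max (normSeq k d θ j x)
      (sSup { r | ∃ m : ℕ, 1 ≤ m ∧ ∃ E : Fin m → Finset (Vec k),
        Admissible k d E ∧ r = θ * ∑ i, normSeq k d θ j (restrict (E i) x) })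

/-- The norm of `T_k(d,θ)` on finitely supported vectors. -/
noncomputable def tnorm (k d : ℕ) (θ : ℝ) (x : Vec k →₀ ℝ) : ℝ :=
  ⨆ j, normSeq k d θ j x

/-- An almost admissible sequence of finite subsets of `ω^{[k]}`. -/
def AlmostAdmissible (k d : ℕ) {m : ℕ} (F : Fin m → Finset (Vec k)) : Prop :=
  ∃ E : Fin m → Finset (Vec k), Admissible k d E ∧ ∀ i, F i ⊆ E i

/-- The sets `K_n` of norming functionals. -/
noncomputable def Kset (k d : ℕ) (θ : ℝ) : ℕ → Set (Vec k →₀ ℝ)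
  | 0 => { f | ∃ v, f = Finsupp.single v 1 ∨ f = -Finsupp.single v 1 }
  | n + 1 => Kset k d θ n ∪
      { f | ∃ m : ℕ, 1 ≤ m ∧ m ≤ d ∧ ∃ g : Fin m → (Vec k →₀ ℝ),
        (∀ i, g i ∈ Kset k d θ n) ∧
        AlmostAdmissible k d (fun i => (g i).support) ∧
        f = θ • ∑ i, g i }

/-- The pairing `f(x)` of a functional with a vector. -/
noncomputable def pairF {k : ℕ} (f x : Vec k →₀ ℝ) : ℝ :=
  ∑ v ∈ f.support, f v * x v

/-! ### auxiliary lemmas -/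

lemma nonDec_replicate (k : ℕ) : NonDec (List.replicate k 0) := by
  induction k with
  | zero => exact List.isChain_nil
  | succ n ih =>
    cases n with
    | zero => exact List.isChain_singleton 0
    | succ m =>
      rw [List.replicate_succ, List.replicate_succ, NonDec, List.Chain', List.isChain_cons_cons]
      exact ⟨le_refl 0, by rw [← List.replicate_succ]; exact ih⟩

instance vecNonempty (k : ℕ) : Nonempty (Vec k) :=
  ⟨⟨List.replicate k 0, nonDec_replicate k, List.length_replicate⟩⟩

lemma restrict_apply {k : ℕ} (E : Finset (Vec k)) (x : Vec k →₀ ℝ) (v : Vec k) :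
    restrict E x v = if v ∈ E then x v else 0 := by
  rw [restrict, Finsupp.filter_apply]

lemma restrict_restrict {k : ℕ} (E F : Finset (Vec k)) (x : Vec k →₀ ℝ) :
    restrict F (restrict E x) = restrict (F ∩ E) x := by
  ext v
  simp only [restrict_apply, Finset.mem_inter]
  split_ifs <;> tauto

lemma restrict_support_subset {k : ℕ} (E : Finset (Vec k)) (f : Vec k →₀ ℝ) :
    (restrict E f).support ⊆ E := by
  intro v hv
  rw [Finsupp.mem_support_iff, restrict_apply] at hv
  by_contra h
  exact hv (if_neg h)

lemma restrict_support_subset' {k : ℕ} (E : Finset (Vec k)) (f : Vec k →₀ ℝ) :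
    (restrict E f).support ⊆ f.support := by
  intro v hv
  rw [Finsupp.mem_support_iff, restrict_apply] at hv
  rw [Finsupp.mem_support_iff]
  intro h; apply hv; split <;> simp [h]

lemma restrict_smul {k : ℕ} (E : Finset (Vec k)) (c : ℝ) (f : Vec k →₀ ℝ) :
    restrict E (c • f) = c • restrict E f := by
  ext v
  simp only [restrict_apply, Finsupp.smul_apply]
  split_ifs <;> simp

lemma restrict_sum {k : ℕ} {ι : Type*} (E : Finset (Vec k)) (s : Finset ι)
    (g : ι → (Vec k →₀ ℝ)) :
    restrict E (∑ i ∈ s, g i) = ∑ i ∈ s, restrict E (g i) := by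
  ext v
  simp only [restrict_apply, Finsupp.finset_sum_apply]
  split_ifs with h <;> simp [h]

lemma restrict_neg {k : ℕ} (E : Finset (Vec k)) (f : Vec k →₀ ℝ) :
    restrict E (-f) = - restrict E f := by
  ext v
  simp only [restrict_apply, Finsupp.neg_apply]
  split_ifs <;> simp

lemma restrict_single {k : ℕ} (E : Finset (Vec k)) (v : Vec k) (c : ℝ) :
    restrict E (Finsupp.single v c) = if v ∈ E then Finsupp.single v c else 0 := by
  ext w
  by_cases hv : v ∈ E <;> by_cases hwv : w = v <;>
    simp_all [restrict_apply, Finsupp.single_apply, eq_comm]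

/-! ### pairF lemmas -/

lemma pairF_eq {k : ℕ} {f : Vec k →₀ ℝ} (x : Vec k →₀ ℝ) {S : Finset (Vec k)}
    (h : f.support ⊆ S) : pairF f x = ∑ v ∈ S, f v * x v := by
  rw [pairF]
  refine Finset.sum_subset h fun v _ hv => ?_
  rw [Finsupp.notMem_support_iff.mp hv, zero_mul]

lemma pairF_zero {k : ℕ} (x : Vec k →₀ ℝ) : pairF 0 x = 0 := by
  simp [pairF]

lemma pairF_add {k : ℕ} (f g x : Vec k →₀ ℝ) :
    pairF (f + g) x = pairF f x + pairF g x := by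
  classical
  rw [pairF_eq x (S := f.support ∪ g.support) (Finsupp.support_add),
    pairF_eq x (S := f.support ∪ g.support) Finset.subset_union_left,
    pairF_eq x (S := f.support ∪ g.support) Finset.subset_union_right,
    ← Finset.sum_add_distrib]
  exact Finset.sum_congr rfl fun v _ => by simp [add_mul]

lemma pairF_finsum {k : ℕ} {ι : Type*} (s : Finset ι) (g : ι → (Vec k →₀ ℝ))
    (x : Vec k →₀ ℝ) : pairF (∑ i ∈ s, g i) x = ∑ i ∈ s, pairF (g i) x := by
  classical
  induction s using Finset.induction with
  | empty => simp [pairF_zero]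
  | insert _ _ hns ih =>
    rw [Finset.sum_insert hns, Finset.sum_insert hns, pairF_add, ih]

lemma pairF_smul {k : ℕ} (c : ℝ) (f x : Vec k →₀ ℝ) :
    pairF (c • f) x = c * pairF f x := by
  rw [pairF_eq x (S := f.support)
    (Finsupp.support_smul : ((c • f).support ⊆ f.support)), pairF, Finset.mul_sum]
  exact Finset.sum_congr rfl fun v _ => by simp [mul_assoc]

lemma pairF_single {k : ℕ} (v : Vec k) (x : Vec k →₀ ℝ) :
    pairF (Finsupp.single v 1) x = x v := by
  rw [pairF_eq x (S := {v}) (Finsupp.support_single_subset)]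
  simp

lemma pairF_neg {k : ℕ} (f x : Vec k →₀ ℝ) : pairF (-f) x = - pairF f x := by
  have : (-f) = (-1 : ℝ) • f := by ext v; simp
  rw [this, pairF_smul]; ring

lemma pairF_congr_restrict {k : ℕ} {f : Vec k →₀ ℝ} {E : Finset (Vec k)}
    (x : Vec k →₀ ℝ) (h : f.support ⊆ E) :
    pairF f (restrict E x) = pairF f x := by
  rw [pairF, pairF]
  refine Finset.sum_congr rfl fun v hv => ?_
  rw [restrict_apply, if_pos (h hv)]

lemma pairF_restrict {k : ℕ} (E : Finset (Vec k)) (f x : Vec k →₀ ℝ) :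
    pairF f (restrict E x) = pairF (restrict E f) x := by
  rw [pairF, pairF_eq x (S := f.support) (restrict_support_subset' E f)]
  refine Finset.sum_congr rfl fun v _ => ?_
  rw [restrict_apply, restrict_apply]
  split_ifs <;> simp

/-! ### bounds -/

lemma abs_apply_le_l1 {k : ℕ} (x : Vec k →₀ ℝ) (v : Vec k) :
    |x v| ≤ ∑ w ∈ x.support, |x w| := by
  by_cases h : v ∈ x.support
  · exact Finset.single_le_sum (f := fun w => |x w|) (fun _ _ => abs_nonneg _) h
  · rw [Finsupp.notMem_support_iff.mp h, abs_zero]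
    exact Finset.sum_nonneg fun _ _ => abs_nonneg _

lemma normSeq_nonneg (k d : ℕ) (θ : ℝ) : ∀ n (x : Vec k →₀ ℝ), 0 ≤ normSeq k d θ n x
  | 0, x => Real.iSup_nonneg fun v => abs_nonneg _
  | n+1, x => le_trans (normSeq_nonneg k d θ n x) (le_max_left _ _)

lemma normSeq_restrict_bdd (k d : ℕ) (θ : ℝ) (hθ : 0 ≤ θ) (x : Vec k →₀ ℝ) :
    ∀ n, ∃ B, 0 ≤ B ∧ ∀ E : Finset (Vec k), normSeq k d θ n (restrict E x) ≤ B := by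
  intro n
  induction n with
  | zero =>
    refine ⟨∑ w ∈ x.support, |x w|, Finset.sum_nonneg fun _ _ => abs_nonneg _, fun E => ?_⟩
    refine Real.iSup_le (fun v => ?_) (Finset.sum_nonneg fun _ _ => abs_nonneg _)
    rw [restrict_apply]
    split_ifs
    · exact abs_apply_le_l1 x v
    · rw [abs_zero]; exact Finset.sum_nonneg fun _ _ => abs_nonneg _
  | succ n ih =>
    obtain ⟨B, hB0, hB⟩ := ih
    refine ⟨max B (θ * (d * B)), le_max_of_le_left hB0, fun E => ?_⟩
    show max _ (sSup _) ≤ _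
    refine max_le (le_max_of_le_left (hB E)) (le_max_of_le_right ?_)
    refine Real.sSup_le ?_ (by positivity)
    rintro r ⟨m, hm1, F, hF, rfl⟩
    have hsum : ∑ i, normSeq k d θ n (restrict (F i) (restrict E x)) ≤ m * B := by
      calc ∑ i, normSeq k d θ n (restrict (F i) (restrict E x))
          ≤ ∑ _i : Fin m, B := by
            refine Finset.sum_le_sum fun i _ => ?_
            rw [restrict_restrict]; exact hB _
        _ = m * B := by simp [mul_comm]
    calc θ * ∑ i, normSeq k d θ n (restrict (F i) (restrict E x))
        ≤ θ * (m * B) := by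
          exact mul_le_mul_of_nonneg_left hsum hθ
      _ ≤ θ * (d * B) := by
          have hmd : (m : ℝ) ≤ d := Nat.cast_le.mpr hF.1
          exact mul_le_mul_of_nonneg_left (mul_le_mul_of_nonneg_right hmd hB0) hθ

/-! ### Kset lemmas -/

lemma Kset_succ (k d : ℕ) (θ : ℝ) (n : ℕ) :
    Kset k d θ (n+1) = Kset k d θ n ∪
      { f | ∃ m : ℕ, 1 ≤ m ∧ m ≤ d ∧ ∃ g : Fin m → (Vec k →₀ ℝ),
        (∀ i, g i ∈ Kset k d θ n) ∧
        AlmostAdmissible k d (fun i => (g i).support) ∧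
        f = θ • ∑ i, g i } := rfl

lemma Kset_mono_succ (k d : ℕ) (θ : ℝ) (n : ℕ) :
    Kset k d θ n ⊆ Kset k d θ (n+1) := by
  rw [Kset_succ]; exact Set.subset_union_left

lemma Kset_zero_subset (k d : ℕ) (θ : ℝ) : ∀ n, Kset k d θ 0 ⊆ Kset k d θ n
  | 0 => subset_rfl
  | n+1 => (Kset_zero_subset k d θ n).trans (Kset_mono_succ k d θ n)

lemma Dset_nonempty (k d : ℕ) (θ : ℝ) (n : ℕ) (x : Vec k →₀ ℝ) :
    {r | ∃ f ∈ Kset k d θ n, r = pairF f x}.Nonempty := by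
  obtain ⟨v⟩ := vecNonempty k
  exact ⟨pairF (Finsupp.single v 1) x,
    Finsupp.single v 1, Kset_zero_subset k d θ n ⟨v, Or.inl rfl⟩, rfl⟩

lemma Dset_exists_nonneg (k d : ℕ) (θ : ℝ) (n : ℕ) (x : Vec k →₀ ℝ) :
    ∃ r ∈ {r | ∃ f ∈ Kset k d θ n, r = pairF f x}, 0 ≤ r := by
  obtain ⟨v⟩ := vecNonempty k
  rcases le_total 0 (x v) with h | h
  · exact ⟨pairF (Finsupp.single v 1) x,
      ⟨Finsupp.single v 1, Kset_zero_subset k d θ n ⟨v, Or.inl rfl⟩, rfl⟩,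
      by rwa [pairF_single]⟩
  · exact ⟨pairF (-Finsupp.single v 1) x,
      ⟨-Finsupp.single v 1, Kset_zero_subset k d θ n ⟨v, Or.inr rfl⟩, rfl⟩,
      by rw [pairF_neg, pairF_single]; linarith⟩

/-! ### subfamilies of admissible families -/

lemma admissible_comp {k d m : ℕ} {E : Fin m → Finset (Vec k)} (hE : Admissible k d E)
    (t : Finset (Fin m)) :
    Admissible k d (fun j : Fin t.card => E ((t.orderIsoOfFin rfl j) : Fin m)) := by
  refine ⟨?_, fun j => hE.2.1 _, fun i j hij => hE.2.2 _ _ ?_⟩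
  · calc t.card ≤ (Finset.univ : Finset (Fin m)).card :=
        Finset.card_le_card (Finset.subset_univ t)
      _ = m := by simp
      _ ≤ d := hE.1
  · exact (t.orderIsoOfFin rfl).strictMono hij

lemma sum_orderIso {M : Type*} [AddCommMonoid M] {m : ℕ} (t : Finset (Fin m))
    (φ : Fin m → M) :
    ∑ i ∈ t, φ i = ∑ l : Fin t.card, φ ((t.orderIsoOfFin rfl l) : Fin m) := by
  rw [← Finset.sum_coe_sort t φ]
  exact (Fintype.sum_equiv (t.orderIsoOfFin rfl).toEquiv _ _ (fun l => rfl)).symm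

lemma sum_filter_ne_zero {M : Type*} [AddCommMonoid M] {m : ℕ} (φ : Fin m → M)
    [DecidablePred fun i => φ i ≠ 0] :
    ∑ i, φ i = ∑ i ∈ Finset.univ.filter (fun i => φ i ≠ 0), φ i :=
  (Finset.sum_filter_ne_zero Finset.univ).symm

/-- `K_n` is closed under restrictions, up to `0`. -/
lemma Kset_restrict (k d : ℕ) (θ : ℝ) :
    ∀ n, ∀ f ∈ Kset k d θ n, ∀ E : Finset (Vec k),
      restrict E f = 0 ∨ restrict E f ∈ Kset k d θ n := by
  intro n
  induction n with
  | zero =>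
    rintro f ⟨v, rfl | rfl⟩ E
    · rw [restrict_single]
      split_ifs with h
      · exact Or.inr ⟨v, Or.inl rfl⟩
      · exact Or.inl rfl
    · rw [restrict_neg, restrict_single]
      split_ifs with h
      · exact Or.inr ⟨v, Or.inr rfl⟩
      · exact Or.inl (by simp)
  | succ n ih =>
    intro f hf E
    rw [Kset_succ] at hf
    rcases hf with hf | ⟨m, hm1, hmd, g, hg, ⟨A, hA, hsub⟩, rfl⟩
    · rcases ih f hf E with h | h
      · exact Or.inl h
      · exact Or.inr (Kset_mono_succ k d θ n h)
    · classical
      set g' : Fin m → (Vec k →₀ ℝ) := fun i => restrict E (g i) with hg'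
      set t : Finset (Fin m) := Finset.univ.filter (fun i => g' i ≠ 0) with ht
      set e := t.orderIsoOfFin rfl with he
      have hre : restrict E (θ • ∑ i, g i) = θ • ∑ l : Fin t.card, g' (e l) := by
        rw [restrict_smul, restrict_sum, ← hg', sum_filter_ne_zero g', ← ht, sum_orderIso, he]
      rcases Nat.eq_zero_or_pos t.card with hc | hc
      · left
        rw [hre]
        have : (∑ l : Fin t.card, g' (e l)) = 0 := by
          rw [Finset.sum_eq_zero]
          intro l _
          exact absurd l.2 (by omega)
        rw [this, smul_zero]
      · right
        rw [Kset_succ]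
        right
        refine ⟨t.card, hc, ?_, fun l => g' (e l), ?_, ?_, hre⟩
        · calc t.card ≤ (Finset.univ : Finset (Fin m)).card :=
              Finset.card_le_card (Finset.subset_univ t)
            _ = m := by simp
            _ ≤ d := hmd
        · intro l
          have hne : g' (e l) ≠ 0 := (Finset.mem_filter.mp (e l).2).2
          rcases ih (g (e l)) (hg _) E with h | h
          · exact absurd h hne
          · exact h
        · refine ⟨fun l => A ((e l : Fin m)), admissible_comp hA t, fun l => ?_⟩
          exact (restrict_support_subset' E _).trans (hsub _)

/-! ### main induction -/

lemma normSeq_succ_eq (k d : ℕ) (θ : ℝ) (n : ℕ) (x : Vec k →₀ ℝ) :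
    normSeq k d θ (n+1) x = max (normSeq k d θ n x)
      (sSup { r | ∃ m : ℕ, 1 ≤ m ∧ ∃ E : Fin m → Finset (Vec k),
        Admissible k d E ∧ r = θ * ∑ i, normSeq k d θ n (restrict (E i) x) }) := rfl

lemma key (k d : ℕ) (θ : ℝ) (hθ0 : 0 < θ) :
    ∀ n (x : Vec k →₀ ℝ),
      (∀ f ∈ Kset k d θ n, pairF f x ≤ normSeq k d θ n x) ∧
      normSeq k d θ n x = sSup {r | ∃ f ∈ Kset k d θ n, r = pairF f x} := by
  intro n
  induction n with
  | zero =>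
    intro x
    have hbd : BddAbove (Set.range fun v : Vec k => |x v|) :=
      ⟨∑ w ∈ x.support, |x w|, by rintro r ⟨v, rfl⟩; exact abs_apply_le_l1 x v⟩
    have hA : ∀ f ∈ Kset k d θ 0, pairF f x ≤ normSeq k d θ 0 x := by
      rintro f ⟨v, rfl | rfl⟩
      · rw [pairF_single]
        exact le_trans (le_abs_self _) (le_ciSup hbd v)
      · rw [pairF_neg, pairF_single]
        exact le_trans (neg_le_abs _) (le_ciSup hbd v)
    refine ⟨hA, le_antisymm ?_ ?_⟩
    · have hDbdd : BddAbove {r | ∃ f ∈ Kset k d θ 0, r = pairF f x} :=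
        ⟨normSeq k d θ 0 x, by rintro r ⟨f, hf, rfl⟩; exact hA f hf⟩
      refine ciSup_le fun v => ?_
      have h1 : x v ≤ sSup {r | ∃ f ∈ Kset k d θ 0, r = pairF f x} :=
        le_csSup hDbdd ⟨Finsupp.single v 1, ⟨v, Or.inl rfl⟩, (pairF_single v x).symm⟩
      have h2 : -(x v) ≤ sSup {r | ∃ f ∈ Kset k d θ 0, r = pairF f x} :=
        le_csSup hDbdd ⟨-Finsupp.single v 1, ⟨v, Or.inr rfl⟩,
          by rw [pairF_neg, pairF_single]⟩
      exact abs_le'.mpr ⟨h1, h2⟩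
    · exact csSup_le (Dset_nonempty k d θ 0 x) (by rintro r ⟨f, hf, rfl⟩; exact hA f hf)
  | succ n ih =>
    intro x
    obtain ⟨B, hB0, hB⟩ := normSeq_restrict_bdd k d θ hθ0.le x n
    have hSbdd : BddAbove { r | ∃ m : ℕ, 1 ≤ m ∧ ∃ E : Fin m → Finset (Vec k),
        Admissible k d E ∧ r = θ * ∑ i, normSeq k d θ n (restrict (E i) x) } := by
      refine ⟨θ * (d * B), ?_⟩
      rintro r ⟨m, hm1, E, hE, rfl⟩
      have hsum : ∑ i, normSeq k d θ n (restrict (E i) x) ≤ m * B := by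
        calc ∑ i, normSeq k d θ n (restrict (E i) x) ≤ ∑ _i : Fin m, B :=
            Finset.sum_le_sum fun i _ => hB _
          _ = m * B := by simp [mul_comm]
      have hmd : (m : ℝ) ≤ d := Nat.cast_le.mpr hE.1
      calc θ * ∑ i, normSeq k d θ n (restrict (E i) x) ≤ θ * (m * B) :=
          mul_le_mul_of_nonneg_left hsum hθ0.le
        _ ≤ θ * (d * B) :=
          mul_le_mul_of_nonneg_left (mul_le_mul_of_nonneg_right hmd hB0) hθ0.le
    have hA : ∀ f ∈ Kset k d θ (n+1), pairF f x ≤ normSeq k d θ (n+1) x := by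
      intro f hf
      rw [Kset_succ] at hf
      rw [normSeq_succ_eq]
      rcases hf with hf | ⟨m, hm1, hmd, g, hg, ⟨E, hE, hsub⟩, rfl⟩
      · exact le_trans ((ih x).1 f hf) (le_max_left _ _)
      · have hpair : pairF (θ • ∑ i, g i) x = θ * ∑ i, pairF (g i) x := by
          rw [pairF_smul, pairF_finsum]
        have hterm : ∀ i, pairF (g i) x ≤ normSeq k d θ n (restrict (E i) x) := by
          intro i
          have h := (ih (restrict (E i) x)).1 (g i) (hg i)
          rwa [pairF_congr_restrict _ (hsub i)] at h
        have hle : pairF (θ • ∑ i, g i) x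
            ≤ θ * ∑ i, normSeq k d θ n (restrict (E i) x) := by
          rw [hpair]
          exact mul_le_mul_of_nonneg_left (Finset.sum_le_sum fun i _ => hterm i) hθ0.le
        exact le_trans hle (le_trans (le_csSup hSbdd ⟨m, hm1, E, hE, rfl⟩)
          (le_max_right _ _))
    refine ⟨hA, le_antisymm ?_
      (csSup_le (Dset_nonempty _ _ _ _ _) (by rintro r ⟨f, hf, rfl⟩; exact hA f hf))⟩
    have hDbdd : BddAbove {r | ∃ f ∈ Kset k d θ (n+1), r = pairF f x} :=
      ⟨normSeq k d θ (n+1) x, by rintro r ⟨f, hf, rfl⟩; exact hA f hf⟩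
    have hD0 : 0 ≤ sSup {r | ∃ f ∈ Kset k d θ (n+1), r = pairF f x} := by
      obtain ⟨r, hr, hr0⟩ := Dset_exists_nonneg k d θ (n+1) x
      exact le_trans hr0 (le_csSup hDbdd hr)
    rw [normSeq_succ_eq]
    refine max_le ?_ ?_
    · rw [(ih x).2]
      refine csSup_le_csSup hDbdd (Dset_nonempty _ _ _ _ _) ?_
      rintro r ⟨f, hf, hr⟩
      exact ⟨f, Kset_mono_succ _ _ _ _ hf, hr⟩
    · refine Real.sSup_le ?_ hD0
      rintro r ⟨m, hm1, E, hE, rfl⟩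
      refine le_of_forall_pos_le_add fun δ hδ => ?_
      classical
      set δ' := δ / (θ * m) with hδ'
      have hm0 : (0:ℝ) < m := by exact_mod_cast hm1
      have hδ'pos : 0 < δ' := div_pos hδ (mul_pos hθ0 hm0)
      have hθmδ : θ * (m * δ') = δ := by
        rw [hδ']; field_simp
      have hch : ∀ i : Fin m,
          ∃ p ∈ {r | ∃ f ∈ Kset k d θ n, r = pairF f (restrict (E i) x)},
            normSeq k d θ n (restrict (E i) x) - δ' < p := by
        intro i
        refine exists_lt_of_lt_csSup (Dset_nonempty _ _ _ _ _) ?_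
        rw [← (ih (restrict (E i) x)).2]
        linarith
      choose p hp hplt using hch
      choose f hfK hfp using hp
      set g : Fin m → (Vec k →₀ ℝ) := fun i => restrict (E i) (f i) with hgdef
      have hlow : ∀ i, normSeq k d θ n (restrict (E i) x) - δ' < pairF (g i) x := by
        intro i
        have := hplt i
        rw [hfp i, pairF_restrict] at this
        exact this
      set t : Finset (Fin m) := Finset.univ.filter (fun i => g i ≠ 0) with ht
      set e := t.orderIsoOfFin rfl with he
      have hsum_all : ∑ i ∈ t, pairF (g i) x = ∑ i, pairF (g i) x := by
        refine Finset.sum_subset (Finset.subset_univ t) fun i _ hit => ?_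
        have hgi : g i = 0 := by
          by_contra hne
          exact hit (Finset.mem_filter.mpr ⟨Finset.mem_univ i, hne⟩)
        rw [hgi, pairF_zero]
      have hges : ∑ i, normSeq k d θ n (restrict (E i) x) - m * δ'
          ≤ ∑ i, pairF (g i) x := by
        have h1 : ∑ i : Fin m, (normSeq k d θ n (restrict (E i) x) - δ')
            ≤ ∑ i, pairF (g i) x :=
          Finset.sum_le_sum fun i _ => (hlow i).le
        have h2 : ∑ i : Fin m, (normSeq k d θ n (restrict (E i) x) - δ')
            = ∑ i, normSeq k d θ n (restrict (E i) x) - m * δ' := by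
          rw [Finset.sum_sub_distrib]
          simp [mul_comm]
        linarith
      rcases Nat.eq_zero_or_pos t.card with hc | hc
      · have htempty : t = ∅ := Finset.card_eq_zero.mp hc
        have hz : ∑ i, pairF (g i) x = 0 := by
          rw [← hsum_all, htempty, Finset.sum_empty]
        have : θ * ∑ i, normSeq k d θ n (restrict (E i) x) ≤ δ := by
          have h3 : ∑ i, normSeq k d θ n (restrict (E i) x) ≤ m * δ' := by linarith
          calc θ * ∑ i, normSeq k d θ n (restrict (E i) x) ≤ θ * (m * δ') :=
              mul_le_mul_of_nonneg_left h3 hθ0.le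
            _ = δ := hθmδ
        linarith
      · set F : Vec k →₀ ℝ := θ • ∑ l : Fin t.card, g ((e l : Fin m)) with hF
        have hFmem : F ∈ Kset k d θ (n+1) := by
          rw [Kset_succ]
          right
          refine ⟨t.card, hc, ?_, fun l => g ((e l : Fin m)), ?_, ?_, hF⟩
          · calc t.card ≤ (Finset.univ : Finset (Fin m)).card :=
                Finset.card_le_card (Finset.subset_univ t)
              _ = m := by simp
              _ ≤ d := hE.1
          · intro l
            have hne : g ((e l : Fin m)) ≠ 0 := (Finset.mem_filter.mp (e l).2).2
            rcases Kset_restrict k d θ n (f _) (hfK _) (E ((e l : Fin m))) with h | h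
            · exact absurd h hne
            · exact h
          · exact ⟨fun l => E ((e l : Fin m)), admissible_comp hE t,
              fun l => restrict_support_subset _ _⟩
        have hFpair : pairF F x = θ * ∑ i, pairF (g i) x := by
          rw [hF, pairF_smul, pairF_finsum, ← hsum_all, sum_orderIso t, he]
        have hsupF : pairF F x ≤ sSup {r | ∃ f ∈ Kset k d θ (n+1), r = pairF f x} :=
          le_csSup hDbdd ⟨F, hFmem, rfl⟩
        have h4 := mul_le_mul_of_nonneg_left hges hθ0.le
        have h5 : θ * (∑ i, normSeq k d θ n (restrict (E i) x) - ↑m * δ')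
            = θ * ∑ i, normSeq k d θ n (restrict (E i) x) - θ * (↑m * δ') := by ring
        linarith [hFpair]

/-- the implicit norms agree with their dual description:
`|x|_n = max { f(x) : f ∈ K_n }`. -/
theorem normSeq_eq_dual (k d : ℕ) (hd : 1 ≤ d) (θ : ℝ) (hθ0 : 0 < θ) (hθ1 : θ < 1)
    (n : ℕ) (x : Vec k →₀ ℝ) :
    normSeq k d θ n x = sSup { r | ∃ f ∈ Kset k d θ n, r = pairF f x } :=
  (key k d θ hθ0 n x).2
end

section
/- Let s = (a_1,…,a_l) ∈ ω^{≤k} with l < k, let m > a_l, and set v = s⌢(m,m,…,m) ∈ ω^{[k]}. Then X_v^max ∩ τ^k[s] = ⋃_{j=m}^∞ τ^k[s⌢j]. -/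
lemma NonDec.getD_mono {w : List ℕ} (hw : NonDec w) {i j : ℕ} (hij : i ≤ j)
    (hj : j < w.length) : w.getD i 0 ≤ w.getD j 0 := by
  rcases eq_or_lt_of_le hij with rfl | h
  · exact le_refl _
  · rw [List.getD_eq_getElem _ _ (lt_of_le_of_lt hij hj), List.getD_eq_getElem _ _ hj]
    exact List.pairwise_iff_get.mp (List.isChain_iff_pairwise.mp hw) ⟨i, _⟩ ⟨j, _⟩ h

lemma getLast!_append_replicate (s : List ℕ) (n m : ℕ) (hn : n ≠ 0) :
    (s ++ List.replicate n m).getLast! = m := by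
  obtain ⟨n', rfl⟩ := Nat.exists_eq_succ_of_ne_zero hn
  rw [List.replicate_succ', ← List.append_assoc,
    getLast!_eq_getLast _ (by simp), List.getLast_append]
  simp

/-- for `s = (a_1,…,a_l)` with `l < k`, `m > a_l`, and
`v = s⌢(m,…,m) ∈ ω^{[k]}`, we have `X_v^max ∩ τ^k[s] = ⋃_{j ≥ m} τ^k[s⌢j]`. -/
theorem XmaxSet_inter_tau (k : ℕ) (s : List ℕ) (hs : NonDec s) (hne : s ≠ [])
    (hlen : s.length < k) (m : ℕ) (hm : s.getLast! < m) :
    XmaxSet (s ++ List.replicate (k - s.length) m) ∩ tau k s =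
      ⋃ j : ℕ, ⋃ _ : m ≤ j, tau k (s ++ [j]) := by
  have hl0 : 0 < s.length := List.length_pos_iff.mpr hne
  have hrep : k - s.length ≠ 0 := by omega
  have hvlen : (s ++ List.replicate (k - s.length) m).length = k := by
    simp; omega
  have hvlast : (s ++ List.replicate (k - s.length) m).getLast! = m :=
    getLast!_append_replicate _ _ _ hrep
  have hvget : ∀ i, s.length ≤ i → i < k →
      (s ++ List.replicate (k - s.length) m).getD i 0 = m := by
    intro i h1 h2
    rw [List.getD_append_right _ _ _ _ h1,
      List.getD_eq_getElem _ _ (by simp; omega), List.getElem_replicate]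
  have hvtake1 : (s ++ List.replicate (k - s.length) m).take (s.length + 1) = s ++ [m] := by
    obtain ⟨n', hn'⟩ := Nat.exists_eq_succ_of_ne_zero hrep
    rw [hn', List.replicate_succ, List.take_append]
    simp [List.take_of_length_le]
  ext w
  simp only [Set.mem_inter_iff, Set.mem_iUnion, XmaxSet, tau, Set.mem_setOf_eq,
    hvlen, hvlast]
  constructor
  · rintro ⟨⟨-, -, hcase⟩, hwk, hndw, t, rfl⟩
    cases t with
    | nil => exfalso; simp at hwk; omega
    | cons j t' =>
      have hwlen : (s ++ j :: t').length = k := hwk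
      have hwl : (s ++ j :: t').getD s.length 0 = j := by
        rw [List.getD_append_right _ _ _ _ (le_refl _)]; simp
      refine ⟨j, ?_, hwk, hndw, ⟨t', by simp⟩⟩
      rcases hcase with hhd | ⟨i, hi1, hik, htake, hlt⟩
      · exfalso
        cases s with
        | nil => exact hne rfl
        | cons a s0 =>
          have h1 : (a :: s0).getD 0 0 ≤ (a :: s0).getD ((a :: s0).length - 1) 0 :=
            hs.getD_mono (Nat.zero_le _) (by simp)
          rw [← getLast!_eq_getD _ (by simp)] at h1
          simp only [List.cons_append, List.headI_cons] at hhd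
          simp only [List.getD_cons_zero] at h1
          omega
      · rcases le_or_gt i s.length with hi | hi
        · have h2 : m < (s ++ j :: t').getD i 0 := hlt (by omega)
          have h3 : (s ++ j :: t').getD i 0 ≤ (s ++ j :: t').getD s.length 0 :=
            hndw.getD_mono hi (by omega)
          omega
        · -- s.length < i : show j = m
          have h4 : (s ++ j :: t').take (s.length + 1) = s ++ [m] := by
            have : (s ++ j :: t').take (s.length + 1)
                = ((s ++ j :: t').take i).take (s.length + 1) := by
              rw [List.take_take, Nat.min_eq_left (by omega)]
            rw [this, htake, List.take_take, Nat.min_eq_left (by omega), hvtake1]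
          have h5 : (s ++ j :: t').take (s.length + 1) = s ++ [j] := by
            rw [show s ++ j :: t' = (s ++ [j]) ++ t' by simp, List.take_left' (by simp)]
          rw [h5] at h4
          simp at h4
          omega
  · rintro ⟨j, hj, hwk, hndw, t, rfl⟩
    have hwk' : ((s ++ [j]) ++ t).length = k := hwk
    have hspre : s <+: (s ++ [j]) ++ t := (s.prefix_append [j]).trans (List.prefix_append _ _)
    have hwl : ((s ++ [j]) ++ t).getD s.length 0 = j := by
      rw [List.append_assoc, List.getD_append_right _ _ _ _ (le_refl _)]; simp
    have hPl : ((s ++ [j]) ++ t).take s.length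
        = (s ++ List.replicate (k - s.length) m).take s.length := by
      rw [List.take_left' rfl, List.append_assoc, List.take_left' rfl]
    set P : ℕ → Prop := fun n => ((s ++ [j]) ++ t).take n = (s ++ List.replicate (k - s.length) m).take n with hP
    set i := Nat.findGreatest P k with hi
    have hPi : P i := Nat.findGreatest_spec (by omega) hPl
    have hli : s.length ≤ i := Nat.le_findGreatest (by omega) hPl
    have hik : i ≤ k := Nat.findGreatest_le k
    refine ⟨⟨hwk, hndw, Or.inr ⟨i, by omega, hik, hPi, ?_⟩⟩, hwk, hndw, hspre⟩
    intro hik2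
    have hnP : ¬ P (i + 1) := Nat.findGreatest_is_greatest (n := k) (by omega) (by omega)
    have hwlen' : i < ((s ++ [j]) ++ t).length := by rw [hwk']; omega
    have hvlen' : i < (s ++ List.replicate (k - s.length) m).length := by rw [hvlen]; omega
    have h2 : ((s ++ [j]) ++ t).take (i + 1)
        = ((s ++ [j]) ++ t).take i ++ [((s ++ [j]) ++ t).getD i 0] := by
      rw [List.getD_eq_getElem _ _ hwlen', ← List.take_concat_get hwlen',
        List.concat_eq_append]
    have h3 : (s ++ List.replicate (k - s.length) m).take (i + 1)
        = (s ++ List.replicate (k - s.length) m).take i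
          ++ [(s ++ List.replicate (k - s.length) m).getD i 0] := by
      rw [List.getD_eq_getElem _ _ hvlen', ← List.take_concat_get hvlen',
        List.concat_eq_append]
    have hne2 : ((s ++ [j]) ++ t).getD i 0 ≠ m := by
      intro he
      apply hnP
      show _ = _
      rw [h2, h3, hPi, he, hvget i (by omega) hik2]
    have h6 := hndw.getD_mono hli hwlen'
    rw [hwl] at h6
    omega
end

section
/- Let Φ : ω^{[k]} → ω^{[k+1]} be given by Φ(v) = (0)⌢v. For every E ∈ AR^k with ≺-minimum v, there exists F ∈ AR^{k+1} such that Φ(E) ⊆ F, min_≺(F) = min_≺(Φ(E)), and max_≺(F) = max_≺(Φ(E)). -/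
namespace ARhelp

lemma lex_trans : ∀ {a b c : List ℕ}, List.Lex (· < ·) a b → List.Lex (· < ·) b c →
    List.Lex (· < ·) a c
  | _, _, _, .nil, .rel _ => .nil
  | _, _, _, .nil, .cons _ => .nil
  | _, _, _, .rel h, .rel h' => .rel (Nat.lt_trans h h')
  | _, _, _, .rel h, .cons _ => .rel h
  | _, _, _, .cons _, .rel h' => .rel h'
  | _, _, _, .cons h, .cons h' => .cons (lex_trans h h')

lemma lex_irrefl (l : List ℕ) : ¬ List.Lex (· < ·) l l := by
  induction l with
  | nil => intro h; cases h
  | cons a t ih =>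
    intro h
    cases h with
    | cons h => exact ih h
    | rel h => exact lt_irrefl _ h

lemma getLast!_eq_getLast (l : List ℕ) (h : l ≠ []) : l.getLast! = l.getLast h := by
  cases l with
  | nil => exact absurd rfl h
  | cons a t => rfl

lemma getLast!_concat (l : List ℕ) (a : ℕ) : (l ++ [a]).getLast! = a := by
  rw [getLast!_eq_getLast _ (by simp)]
  exact List.getLast_concat

lemma getLast!_cons (a : ℕ) (l : List ℕ) (h : l ≠ []) : (a :: l).getLast! = l.getLast! := by
  rw [getLast!_eq_getLast _ (by simp), getLast!_eq_getLast _ h]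
  exact List.getLast_cons h

lemma getD_last (l : List ℕ) (h : l ≠ []) : l.getD (l.length - 1) 0 = l.getLast! := by
  have hl : 0 < l.length := List.length_pos_iff.2 h
  rw [List.getD_eq_getElem _ _ (by omega), getLast!_eq_getLast _ h, List.getLast_eq_getElem]

lemma nondec_getD_mono {l : List ℕ} (h : NonDec l) {i j : ℕ} (hij : i ≤ j) (hj : j < l.length) :
    l.getD i 0 ≤ l.getD j 0 := by
  rcases eq_or_lt_of_le hij with rfl | hlt
  · exact le_refl _
  · have hp := (List.isChain_iff_pairwise).1 h
    rw [List.getD_eq_getElem _ _ (lt_of_le_of_lt hij hj), List.getD_eq_getElem _ _ hj]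
    exact List.pairwise_iff_getElem.1 hp i j _ _ hlt

lemma nondec_le_getLast! {l : List ℕ} (h : NonDec l) {x : ℕ} (hx : x ∈ l) : x ≤ l.getLast! := by
  obtain ⟨n, hn, rfl⟩ := List.mem_iff_getElem.1 hx
  have hne : l ≠ [] := by rintro rfl; simp at hn
  rw [← getD_last l hne, ← List.getD_eq_getElem l 0 hn]
  exact nondec_getD_mono h (by omega) (by omega)

lemma nondec_eq_replicate {l : List ℕ} (h : NonDec l) (h0 : l.getLast! = 0) :
    l = List.replicate l.length 0 := by
  apply List.ext_getElem (by simp)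
  intro n h1 h2
  rw [List.getElem_replicate]
  have := nondec_le_getLast! h (List.getElem_mem h1)
  omega

lemma nondec_replicate (n : ℕ) : NonDec (List.replicate n 0) := by
  induction n with
  | zero => exact List.IsChain.nil
  | succ n ih =>
    rw [List.replicate_succ]
    exact List.isChain_cons.2 ⟨fun y _ => Nat.zero_le y, ih⟩

lemma getLast!_replicate {n : ℕ} (h : 0 < n) : (List.replicate n (0:ℕ)).getLast! = 0 := by
  obtain ⟨m, rfl⟩ : ∃ m, n = m + 1 := ⟨n - 1, by omega⟩
  have : List.replicate (m+1) (0:ℕ) = List.replicate m 0 ++ [0] := by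
    rw [List.replicate_add]; rfl
  rw [this, getLast!_concat]

lemma prec_irrefl (l : List ℕ) : ¬ prec l l := by
  rintro (⟨rfl, h⟩ | ⟨h1, h2, h3 | ⟨h3, h4⟩⟩)
  · exact h rfl
  · exact lt_irrefl _ h3
  · exact lex_irrefl l h4

lemma prec_trans {a b c : List ℕ} (h1 : prec a b) (h2 : prec b c) : prec a c := by
  rcases h1 with ⟨rfl, hb⟩ | ⟨ha, hb, h1⟩
  · rcases h2 with ⟨hb', _⟩ | ⟨_, hc, _⟩
    · exact absurd hb' hb
    · exact Or.inl ⟨rfl, hc⟩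
  · rcases h2 with ⟨rfl, _⟩ | ⟨_, hc, h2⟩
    · exact absurd rfl hb
    · refine Or.inr ⟨ha, hc, ?_⟩
      rcases h1 with h1 | ⟨e1, l1⟩ <;> rcases h2 with h2 | ⟨e2, l2⟩
      · exact Or.inl (h1.trans h2)
      · exact Or.inl (e2 ▸ h1)
      · exact Or.inl (e1 ▸ h2)
      · exact Or.inr ⟨e1.trans e2, lex_trans l1 l2⟩

lemma prec_asymm {a b : List ℕ} (h1 : prec a b) (h2 : prec b a) : False :=
  prec_irrefl a (prec_trans h1 h2)

lemma prec_cons_zero {a b : List ℕ} (h : prec a b) : prec (0 :: a) (0 :: b) := by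
  rcases h with ⟨rfl, hb⟩ | ⟨ha, hb, h⟩
  · refine Or.inr ⟨by simp, by simp, ?_⟩
    cases b with
    | nil => exact absurd rfl hb
    | cons x t =>
      have h0 : (([0] : List ℕ)).getLast! = 0 := rfl
      rcases Nat.eq_zero_or_pos ((0 :: x :: t).getLast!) with hz | hp
      · exact Or.inr ⟨by rw [h0, hz], List.Lex.cons List.Lex.nil⟩
      · exact Or.inl (by rw [h0]; omega)
  · refine Or.inr ⟨by simp, by simp, ?_⟩
    rw [getLast!_cons 0 a ha, getLast!_cons 0 b hb]
    rcases h with h | ⟨e, lx⟩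
    · exact Or.inl h
    · exact Or.inr ⟨e, List.Lex.cons lx⟩

lemma prec_replicate {s : List ℕ} (hs : NonDec s) (hne : s ≠ List.replicate s.length 0) :
    prec (List.replicate s.length 0) s := by
  have hsne : s ≠ [] := by rintro rfl; exact hne rfl
  have hn : 0 < s.length := List.length_pos_iff.2 hsne
  refine Or.inr ⟨?_, hsne, Or.inl ?_⟩
  · intro h
    have h2 : (List.replicate s.length (0:ℕ)).length = 0 := by rw [h]; rfl
    rw [List.length_replicate] at h2
    omega
  · rw [getLast!_replicate hn]
    rcases Nat.eq_zero_or_pos s.getLast! with h0 | h0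
    · exact absurd (nondec_eq_replicate hs h0) hne
    · exact h0


/-! ### the `xh` machinery -/

def xh (L : ℕ) (w s : List ℕ) : List ℕ :=
  List.zipWith (fun a b => if b = 0 then a else L + b) (w.take s.length) s

lemma Xhat_eq_xh (v s : List ℕ) : Xhat v s = xh v.getLast! v s := rfl

lemma xh_nil (L : ℕ) (w : List ℕ) : xh L w [] = [] := by
  simp [xh]

lemma xh_cons (L c a : ℕ) (w' s' : List ℕ) :
    xh L (c :: w') (a :: s') = (if a = 0 then c else L + a) :: xh L w' s' := by
  simp [xh, List.take_succ_cons]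

lemma xh_length {L : ℕ} {w s : List ℕ} (h : s.length ≤ w.length) :
    (xh L w s).length = s.length := by
  simp [xh]; omega

lemma xh_ne_nil {L : ℕ} {w s : List ℕ} (h : s.length ≤ w.length) (hs : s ≠ []) :
    xh L w s ≠ [] := by
  intro hcon
  have h2 := xh_length (L := L) h
  rw [hcon] at h2
  exact hs (List.length_eq_zero_iff.1 h2.symm)

lemma xh_take (L : ℕ) (w t : List ℕ) (j : ℕ) : xh L w (t.take j) = (xh L w t).take j := by
  simp only [xh, List.take_zipWith, List.take_take, List.length_take]

lemma xh_prefix {L : ℕ} {w s t : List ℕ} (hst : s <+: t) : xh L w s <+: xh L w t := by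
  have h := List.prefix_iff_eq_take.1 hst
  calc xh L w s = (xh L w t).take s.length := by rw [← xh_take]; exact congrArg _ h
  _ <+: xh L w t := List.take_prefix _ _

lemma xh_getElem {L : ℕ} {w s : List ℕ} (h : s.length ≤ w.length) {i : ℕ}
    (hi : i < s.length) (hx : i < (xh L w s).length) :
    (xh L w s)[i] = if s[i] = 0 then w[i]'(by omega) else L + s[i] := by
  simp [xh, List.getElem_zipWith, List.getElem_take]

lemma xh_nondec {L : ℕ} {w s : List ℕ} (hw : NonDec w) (hwL : ∀ x ∈ w, x ≤ L)
    (hs : NonDec s) (h : s.length ≤ w.length) : NonDec (xh L w s) := by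
  refine List.isChain_iff_getElem.2 fun i hlen2 => ?_
  have hxl : (xh L w s).length = s.length := xh_length h
  have hi : i < s.length := by omega
  have hi1 : i + 1 < s.length := by omega
  rw [xh_getElem h hi (by omega), xh_getElem h hi1 (by omega)]
  have hwc : w[i]'(by omega) ≤ w[i+1]'(by omega) := by
    have := List.isChain_iff_getElem.1 hw i (by omega)
    simpa using this
  have hsc : s[i] ≤ s[i+1] := by
    have := List.isChain_iff_getElem.1 hs i (by omega)
    simpa using this
  have hwLi : w[i]'(by omega) ≤ L := hwL _ (List.getElem_mem (by omega))
  split_ifs with h1 h2 h2 <;> omega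

lemma xh_lex (L : ℕ) : ∀ (s : List ℕ) {t w : List ℕ}, (∀ x ∈ w, x ≤ L) →
    s.length ≤ w.length → t.length ≤ w.length → List.Lex (· < ·) s t →
    List.Lex (· < ·) (xh L w s) (xh L w t) := by
  intro s
  induction s with
  | nil =>
    intro t w hwL hsw htw hlex
    cases hlex with
    | nil =>
      obtain ⟨c, w', rfl⟩ : ∃ c w', w = c :: w' := by
        cases w with
        | nil => simp at htw
        | cons c w' => exact ⟨c, w', rfl⟩
      rw [xh_nil, xh_cons]
      exact List.Lex.nil
  | cons a s' ih =>
    intro t w hwL hsw htw hlex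
    obtain ⟨c, w', rfl⟩ : ∃ c w', w = c :: w' := by
      cases w with
      | nil => simp at hsw
      | cons c w' => exact ⟨c, w', rfl⟩
    cases hlex with
    | rel h =>
      rw [xh_cons, xh_cons]
      apply List.Lex.rel
      have hc : c ≤ L := hwL c (by simp)
      by_cases ha : a = 0
      · rw [if_pos ha, if_neg (by omega)]; omega
      · rw [if_neg ha, if_neg (by omega)]; omega
    | cons h =>
      rw [xh_cons, xh_cons]
      exact List.Lex.cons (ih (fun x hx => hwL x (by simp [hx]))
        (by simpa using hsw) (by simpa using htw) h)

lemma xh_getLast! {L : ℕ} {w s : List ℕ} (hs : s ≠ []) (h : s.length ≤ w.length) :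
    (xh L w s).getLast! =
      if s.getLast! = 0 then w.getD (s.length - 1) 0 else L + s.getLast! := by
  obtain ⟨s', b, rfl⟩ : ∃ s' b, s = s' ++ [b] := by
    rcases List.eq_nil_or_concat s with rfl | ⟨s', b, hsb⟩
    · exact absurd rfl hs
    · exact ⟨s', b, by rw [hsb]; simp⟩
  have hlen : s'.length + 1 ≤ w.length := by simpa using h
  have htake : w.take (s'.length + 1) = w.take s'.length ++ [w.getD s'.length 0] := by
    rw [List.take_succ, List.getElem?_eq_getElem (by omega),
      List.getD_eq_getElem _ _ (by omega)]
    rfl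
  have hsplit : xh L w (s' ++ [b]) =
      xh L w s' ++ [if b = 0 then w.getD s'.length 0 else L + b] := by
    show List.zipWith _ (w.take (s' ++ [b]).length) (s' ++ [b]) = _
    rw [show (s' ++ [b]).length = s'.length + 1 by simp, htake,
      List.zipWith_append (by simp [List.length_take]; omega)]
    rfl
  rw [hsplit, getLast!_concat, getLast!_concat]
  simp

lemma lex_replicate_lt : ∀ {m n : ℕ},
    List.Lex (· < ·) (List.replicate m (0:ℕ)) (List.replicate n 0) → m < n := by
  intro m
  induction m with
  | zero =>
    intro n h
    cases n with
    | zero => cases h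
    | succ n => omega
  | succ m ih =>
    intro n h
    cases n with
    | zero => cases h
    | succ n =>
      rw [List.replicate_succ, List.replicate_succ] at h
      cases h with
      | cons h => have := ih h; omega
      | rel h => omega

lemma xh_prec {L : ℕ} {w s t : List ℕ} (hw : NonDec w) (hwL : ∀ x ∈ w, x ≤ L)
    (hs : NonDec s) (ht : NonDec t) (hsw : s.length ≤ w.length) (htw : t.length ≤ w.length)
    (hst : prec s t) : prec (xh L w s) (xh L w t) := by
  rcases hst with ⟨rfl, htne⟩ | ⟨hsne, htne, hcmp⟩
  · exact Or.inl ⟨xh_nil L w, xh_ne_nil htw htne⟩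
  · refine Or.inr ⟨xh_ne_nil hsw hsne, xh_ne_nil htw htne, ?_⟩
    have hls := xh_getLast! (L := L) hsne hsw
    have hlt := xh_getLast! (L := L) htne htw
    rcases hcmp with hlt' | ⟨heq, hlex⟩
    · left
      rw [hls, hlt, if_neg (show ¬ t.getLast! = 0 by omega)]
      by_cases h0 : s.getLast! = 0
      · rw [if_pos h0]
        have hmem : w.getD (s.length - 1) 0 ∈ w := by
          rw [List.getD_eq_getElem _ _ (by have := List.length_pos_iff.2 hsne; omega)]
          exact List.getElem_mem _
        have := hwL _ hmem
        omega
      · rw [if_neg h0]; omega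
    · by_cases h0 : s.getLast! = 0
      · have ht0 : t.getLast! = 0 := by omega
        have hsr := nondec_eq_replicate hs h0
        have htr := nondec_eq_replicate ht ht0
        have hlen : s.length < t.length := by
          apply lex_replicate_lt (m := s.length) (n := t.length)
          rw [← hsr, ← htr]; exact hlex
        rw [hls, hlt, if_pos h0, if_pos ht0]
        have hmono : w.getD (s.length - 1) 0 ≤ w.getD (t.length - 1) 0 :=
          nondec_getD_mono hw (by omega) (by have := List.length_pos_iff.2 htne; omega)
        rcases eq_or_lt_of_le hmono with heq2 | hlt2
        · exact Or.inr ⟨heq2, xh_lex L s hwL hsw htw hlex⟩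
        · exact Or.inl hlt2
      · right
        rw [hls, hlt, if_neg h0, if_neg (by omega)]
        exact ⟨by omega, xh_lex L s hwL hsw htw hlex⟩

lemma isEkTree_xhat {n : ℕ} {w : List ℕ} (hw : NonDec w) (hl : w.length = n) :
    IsEkTree n (Xhat w) := by
  have hwL : ∀ x ∈ w, x ≤ w.getLast! := fun x hx => nondec_le_getLast! hw hx
  constructor
  · intro s hs hsl
    rw [Xhat_eq_xh]
    exact ⟨xh_nondec hw hwL hs (by omega), xh_length (by omega)⟩
  · intro s t hs ht hsl htl
    constructor
    · intro h
      rw [Xhat_eq_xh, Xhat_eq_xh]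
      exact xh_prec hw hwL hs ht (by omega) (by omega) h
    · intro h
      rw [Xhat_eq_xh, Xhat_eq_xh]
      exact xh_prefix h

lemma zip_replicate (L : ℕ) : ∀ (l : List ℕ),
    List.zipWith (fun a b => if b = 0 then a else L + b) l (List.replicate l.length 0) = l := by
  intro l
  induction l with
  | nil => rfl
  | cons a t ih => simp [List.replicate_succ, ih]

lemma xh_replicate {L : ℕ} {w : List ℕ} {n : ℕ} (h : n ≤ w.length) :
    xh L w (List.replicate n 0) = w.take n := by
  show List.zipWith _ (w.take (List.replicate n (0:ℕ)).length) _ = _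
  rw [List.length_replicate]
  have h2 : (w.take n).length = n := by simp; omega
  calc List.zipWith (fun a b => if b = 0 then a else L + b) (w.take n) (List.replicate n 0)
      = List.zipWith (fun a b => if b = 0 then a else L + b) (w.take n)
        (List.replicate (w.take n).length 0) := by rw [h2]
  _ = w.take n := zip_replicate L _

lemma zip_pos (L : ℕ) : ∀ (l m : List ℕ), l.length = m.length → (∀ x ∈ m, x ≠ 0) →
    List.zipWith (fun a b => if b = 0 then a else L + b) l m = m.map (L + ·) := by
  intro l
  induction l with
  | nil =>
    intro m h _
    rw [List.length_nil] at h
    rw [List.length_eq_zero_iff.1 h.symm]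
    rfl
  | cons a t ih =>
    intro m h hm
    cases m with
    | nil => simp at h
    | cons b m' =>
      simp only [List.length_cons, Nat.add_right_cancel_iff] at h
      simp only [List.zipWith_cons_cons, List.map_cons]
      rw [if_neg (hm b (by simp)), ih m' h (fun x hx => hm x (by simp [hx]))]


lemma mem_XmaxSet_of_tree {k : ℕ} {X : List ℕ → List ℕ} (hX : IsEkTree k X) {v : List ℕ}
    (hv : X (List.replicate k 0) = v) {s : List ℕ} (hs : NonDec s) (hsl : s.length = k)
    (hne : X s ≠ v) : X s ∈ XmaxSet v := by
  classical
  have hXlen : ∀ t, NonDec t → t.length ≤ k → (X t).length = t.length :=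
    fun t h1 h2 => (hX.1 t h1 h2).2
  have hvlen : v.length = k := by
    rw [← hv, hXlen _ (nondec_replicate k) (by simp)]; simp
  have hvnd : NonDec v := hv ▸ (hX.1 _ (nondec_replicate k) (by simp)).1
  have hsne' : s ≠ List.replicate k 0 := fun h => hne (by rw [h, hv])
  have hex : ∃ j, j < s.length ∧ s.getD j 0 ≠ 0 := by
    by_contra hcon
    push_neg at hcon
    apply hsne'
    apply List.ext_getElem (by simp [hsl])
    intro n h1 h2
    rw [List.getElem_replicate, ← List.getD_eq_getElem s 0 h1]
    exact hcon n (by omega)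
  set i := Nat.find hex with hidef
  obtain ⟨hil, him⟩ : i < s.length ∧ s.getD i 0 ≠ 0 := Nat.find_spec hex
  set m := s.getD i 0 with hmdef
  have hzero : ∀ j, j < i → s.getD j 0 = 0 := by
    intro j hj
    have h2 := Nat.find_min hex hj
    push_neg at h2
    exact h2 (by omega)
  have hik : i < k := by omega
  have hk1 : 1 ≤ k := by omega
  have hm1 : 1 ≤ m := Nat.one_le_iff_ne_zero.2 him
  have htakei : s.take i = List.replicate i 0 := by
    apply List.ext_getElem (by simp [hsl]; omega)
    intro n h1 h2
    rw [List.getElem_take, List.getElem_replicate,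
      ← List.getD_eq_getElem s 0 (by simp [hsl] at *; omega)]
    exact hzero n (by simp at h1; omega)
  have htakei1 : s.take (i+1) = List.replicate i 0 ++ [m] := by
    apply List.ext_getElem (by simp [hsl]; omega)
    intro n h1 h2
    have hn1 : n < i + 1 := by simp at h2; omega
    rcases Nat.lt_or_ge n i with hn | hn
    · rw [List.getElem_take, List.getElem_append_left (by simp; omega),
        List.getElem_replicate, ← List.getD_eq_getElem s 0 (by omega)]
      exact hzero n hn
    · have hni : n = i := by omega
      subst hni
      rw [List.getElem_take, List.getElem_append_right (by simp)]
      simp only [List.length_replicate, Nat.sub_self]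
      show s[i]'(by omega) = m
      rw [← List.getD_eq_getElem s 0 (by omega)]
  have hPnd : ∀ j, NonDec (List.replicate j 0 ++ [m]) := by
    intro j
    apply List.isChain_append.2
    refine ⟨nondec_replicate j, List.isChain_singleton m, ?_⟩
    intro x hx y hy
    have hx0 : x = 0 := List.eq_of_mem_replicate (List.mem_of_mem_getLast? hx)
    omega
  have hPlen : ∀ j, (List.replicate j (0:ℕ) ++ [m]).length = j + 1 := by simp
  have hPlast : ∀ j, (List.replicate j (0:ℕ) ++ [m]).getLast! = m :=
    fun j => getLast!_concat _ _
  have hpref : ∀ j, j ≤ k → X (List.replicate j 0) = v.take j := by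
    intro j hj
    have hpre : List.replicate j (0:ℕ) <+: List.replicate k 0 :=
      ⟨List.replicate (k - j) 0, by rw [← List.replicate_add]; congr 1; omega⟩
    have h2 := (hX.2 _ _ (nondec_replicate j) (nondec_replicate k)
      (by simp; omega) (by simp)).2 hpre
    rw [hv] at h2
    have hlen : (X (List.replicate j 0)).length = j := by
      rw [hXlen _ (nondec_replicate j) (by simp; omega)]; simp
    have h3 := List.prefix_iff_eq_take.1 h2
    rw [hlen] at h3
    exact h3
  have hqlen : ∀ j, j + 1 ≤ k → (X (List.replicate j 0 ++ [m])).length = j + 1 := by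
    intro j hj
    rw [hXlen _ (hPnd j) (by rw [hPlen]; omega), hPlen]
  have hqne : ∀ j, j + 1 ≤ k → X (List.replicate j 0 ++ [m]) ≠ [] := by
    intro j hj h
    have h2 := hqlen j hj
    rw [h] at h2
    simp at h2
  have hq : ∀ j, (hj : j + 1 ≤ k) → X (List.replicate j 0 ++ [m]) =
      v.take j ++ [(X (List.replicate j 0 ++ [m])).getLast!] := by
    intro j hj
    have h1 : (X (List.replicate j 0 ++ [m])).take j = v.take j := by
      have hpre : List.replicate j (0:ℕ) <+: List.replicate j 0 ++ [m] :=
        List.prefix_append _ _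
      have h2 := (hX.2 _ _ (nondec_replicate j) (hPnd j) (by simp; omega)
        (by rw [hPlen]; omega)).2 hpre
      rw [hpref j (by omega)] at h2
      have h3 := List.prefix_iff_eq_take.1 h2
      have h4 : (v.take j).length = j := by simp [hvlen]; omega
      rw [h4] at h3
      exact h3.symm
    have hdrop : (X (List.replicate j 0 ++ [m])).dropLast = v.take j := by
      rw [List.dropLast_eq_take, hqlen j hj, Nat.add_sub_cancel]
      exact h1
    have hlast : (X (List.replicate j 0 ++ [m])).getLast (hqne j hj) =
        (X (List.replicate j 0 ++ [m])).getLast! :=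
      (getLast!_eq_getLast _ (hqne j hj)).symm
    conv_lhs => rw [← List.dropLast_append_getLast (hqne j hj)]
    rw [hdrop, hlast]
  have hvne : v ≠ [] := by
    intro h
    rw [h] at hvlen
    simp at hvlen
    omega
  have claim1 : v.getLast! < (X (List.replicate (k-1) 0 ++ [m])).getLast! := by
    have hprec : prec (List.replicate k 0) (List.replicate (k-1) 0 ++ [m]) := by
      refine Or.inr ⟨?_, by simp, Or.inl ?_⟩
      · intro h
        have h2 : (List.replicate k (0:ℕ)).length = 0 := by rw [h]; rfl
        rw [List.length_replicate] at h2
        omega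
      · rw [getLast!_replicate hk1, hPlast]
        omega
    have h2 := (hX.2 _ _ (nondec_replicate k) (hPnd _) (by simp)
      (by rw [hPlen]; omega)).1 hprec
    rw [hv] at h2
    rcases h2 with ⟨hv0, _⟩ | ⟨_, _, h | ⟨heq, hlex⟩⟩
    · exact absurd hv0 hvne
    · exact h
    · exfalso
      have hqv : X (List.replicate (k-1) 0 ++ [m]) = v := by
        rw [hq (k-1) (by omega), ← heq]
        conv_rhs => rw [← List.dropLast_append_getLast hvne]
        rw [List.dropLast_eq_take, hvlen, ← getLast!_eq_getLast _ hvne]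
      rw [hqv] at hlex
      exact lex_irrefl v hlex
  have lexP : ∀ j, List.Lex (· < ·)
      (List.replicate (j+1) 0 ++ [m]) (List.replicate j 0 ++ [m]) := by
    intro j
    induction j with
    | zero =>
      simp only [List.replicate_one, List.replicate_zero, List.nil_append, List.cons_append,
        List.nil_append]
      exact List.Lex.rel (by omega)
    | succ j ih =>
      have e1 : List.replicate (j+2) (0:ℕ) ++ [m] = 0 :: (List.replicate (j+1) 0 ++ [m]) := by
        rw [List.replicate_succ]; rfl
      have e2 : List.replicate (j+1) (0:ℕ) ++ [m] = 0 :: (List.replicate j 0 ++ [m]) := by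
        rw [List.replicate_succ]; rfl
      rw [e1, e2]
      exact List.Lex.cons ih
  have claim2 : ∀ j, j + 2 ≤ k → (X (List.replicate (j+1) 0 ++ [m])).getLast! ≤
      (X (List.replicate j 0 ++ [m])).getLast! := by
    intro j hj
    have hprec : prec (List.replicate (j+1) 0 ++ [m]) (List.replicate j 0 ++ [m]) :=
      Or.inr ⟨by simp, by simp, Or.inr ⟨by rw [hPlast, hPlast], lexP j⟩⟩
    have h2 := (hX.2 _ _ (hPnd _) (hPnd _) (by rw [hPlen]; omega)
      (by rw [hPlen]; omega)).1 hprec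
    rcases h2 with ⟨h0, _⟩ | ⟨_, _, h | ⟨heq, _⟩⟩
    · exact absurd h0 (hqne (j+1) (by omega))
    · exact le_of_lt h
    · exact le_of_eq heq
  have chain : ∀ d j, j + d = k - 1 → (X (List.replicate (k-1) 0 ++ [m])).getLast! ≤
      (X (List.replicate j 0 ++ [m])).getLast! := by
    intro d
    induction d with
    | zero =>
      intro j hj
      rw [show j = k - 1 by omega]
    | succ d ih =>
      intro j hj
      have h1 := ih (j+1) (by omega)
      exact h1.trans (claim2 j (by omega))
  have hci : v.getLast! < (X (List.replicate i 0 ++ [m])).getLast! :=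
    lt_of_lt_of_le claim1 (chain (k-1-i) i (by omega))
  have hXsq : (X s).take (i+1) = X (List.replicate i 0 ++ [m]) := by
    have hpre : s.take (i+1) <+: s := List.take_prefix _ _
    rw [htakei1] at hpre
    have h2 := (hX.2 _ _ (hPnd i) hs (by rw [hPlen]; omega) (by omega)).2 hpre
    have h3 := List.prefix_iff_eq_take.1 h2
    rw [hqlen i (by omega)] at h3
    exact h3.symm
  have hXslen : (X s).length = k := by rw [hXlen s hs (by omega), hsl]
  have hgetD : (X s).getD i 0 = (X (List.replicate i 0 ++ [m])).getLast! := by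
    have h2 : ((X s).take (i+1)).getD i 0 = (X s).getD i 0 := by
      rw [List.getD_eq_getElem ((X s).take (i+1)) 0 (by simp [hXslen]; omega),
        List.getD_eq_getElem (X s) 0 (by omega), List.getElem_take]
    rw [← h2, hXsq]
    have h3 := getD_last (X (List.replicate i 0 ++ [m])) (hqne i (by omega))
    rw [hqlen i (by omega), Nat.add_sub_cancel] at h3
    exact h3
  refine ⟨by rw [hXslen, hvlen], (hX.1 s hs (by omega)).1, ?_⟩
  rcases Nat.eq_zero_or_pos i with hi0 | hi0
  · left
    have hXsne : X s ≠ [] := by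
      intro h
      rw [h] at hXslen
      simp at hXslen
      omega
    have hhead : (X s).headI = (X s).getD 0 0 := by
      cases hxs : X s with
      | nil => exact absurd hxs hXsne
      | cons a t => rfl
    rw [hi0] at hgetD hci
    rw [hhead, hgetD]
    exact hci
  · right
    refine ⟨i, hi0, by omega, ?_, fun _ => by rw [hgetD]; exact hci⟩
    have e1 : (X s).take i = ((X s).take (i+1)).take i := by
      rw [List.take_take]
      congr 1
      omega
    rw [e1, hXsq, hq i (by omega)]
    exact List.take_left' (by simp [hvlen]; omega)


lemma finite_bdd (n B : ℕ) : {w : List ℕ | w.length = n ∧ ∀ x ∈ w, x ≤ B}.Finite := by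
  apply Set.Finite.subset
    (Set.finite_range (fun f : Fin n → Fin (B+1) => List.ofFn fun j => (f j : ℕ)))
  rintro w ⟨hlen, hbd⟩
  subst hlen
  refine ⟨fun j => ⟨w[j.val], Nat.lt_succ_of_le (hbd _ (List.getElem_mem j.isLt))⟩, ?_⟩
  apply List.ext_getElem (by simp)
  intro nn h1 h2
  simp [List.getElem_ofFn]

lemma exists_preimage {k : ℕ} {v e : List ℕ} (hv : NonDec v) (hvl : v.length = k)
    (he : NonDec e) (hel : e.length = k) (hcase : e = v ∨ e ∈ XmaxSet v) :
    ∃ s, NonDec s ∧ s.length = k + 1 ∧ (0 :: e) = Xhat (0 :: v) s := by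
  have hwlen : ((0:ℕ) :: v).length = k + 1 := by simp [hvl]
  suffices h : e = v ∨ ∃ i, i < k ∧ e.take i = v.take i ∧
      ∀ j, i ≤ j → j < k → v.getLast! < e.getD j 0 by
    rcases h with rfl | ⟨i, hik, htake, hbig⟩
    · refine ⟨List.replicate (k+1) 0, nondec_replicate _, by simp, ?_⟩
      rw [Xhat_eq_xh, xh_replicate (by omega), ← hwlen, List.take_length]
    · have hk1 : 1 ≤ k := by omega
      have hvne : v ≠ [] := by
        intro h2; rw [h2] at hvl; simp at hvl; omega
      have hene : e ≠ [] := by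
        intro h2; rw [h2] at hel; simp at hel; omega
      have hLw : ((0:ℕ) :: v).getLast! = v.getLast! := getLast!_cons 0 v hvne
      have hdroplen : (e.drop i).length = k - i := by simp [hel]
      have hdropmem : ∀ x ∈ e.drop i, v.getLast! < x := by
        intro x hx
        obtain ⟨n, hn, hxe⟩ := List.mem_iff_getElem.1 hx
        have h1 : i + n < k := by rw [hdroplen] at hn; omega
        have h2 := hbig (i+n) (by omega) h1
        rw [List.getD_eq_getElem _ _ (by omega)] at h2
        rw [← hxe, List.getElem_drop]
        exact h2
      refine ⟨List.replicate (i+1) 0 ++ (e.drop i).map (· - v.getLast!), ?_, ?_, ?_⟩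
      · apply List.isChain_append.2
        refine ⟨nondec_replicate _, ?_, ?_⟩
        · exact List.isChain_map_of_isChain (S := (· ≤ ·)) (fun x => x - v.getLast!)
            (fun a b hab => Nat.sub_le_sub_right hab _) (he.suffix (List.drop_suffix i e))
        · intro x hx y hy
          have hx0 : x = 0 := List.eq_of_mem_replicate (List.mem_of_mem_getLast? hx)
          omega
      · simp [hdroplen]; omega
      · rw [Xhat_eq_xh, hLw]
        have hslen : (List.replicate (i+1) 0 ++ (e.drop i).map (· - v.getLast!)).length
            = k + 1 := by simp [hdroplen]; omega
        show (0:ℕ) :: e = List.zipWith _ (((0:ℕ) :: v).take _) _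
        rw [hslen, ← hwlen, List.take_length]
        have hsplitw : (0:ℕ) :: v = ((0:ℕ) :: v).take (i+1) ++ ((0:ℕ) :: v).drop (i+1) :=
          (List.take_append_drop _ _).symm
        conv_rhs => rw [hsplitw]
        rw [List.zipWith_append (by simp [List.length_take]; omega)]
        have hpart1 : List.zipWith (fun a b => if b = 0 then a else v.getLast! + b)
            (((0:ℕ) :: v).take (i+1)) (List.replicate (i+1) 0) = (0:ℕ) :: e.take i := by
          rw [List.take_succ_cons]
          have hlen2 : ((0:ℕ) :: v.take i).length = i + 1 := by simp [hvl]; omega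
          rw [show List.replicate (i+1) (0:ℕ) = List.replicate ((0:ℕ) :: v.take i).length 0
            by rw [hlen2]]
          rw [zip_replicate, htake]
        have hpart2 : List.zipWith (fun a b => if b = 0 then a else v.getLast! + b)
            (((0:ℕ) :: v).drop (i+1)) ((e.drop i).map (· - v.getLast!)) = e.drop i := by
          have hlenzip : (((0:ℕ) :: v).drop (i+1)).length
              = ((e.drop i).map (· - v.getLast!)).length := by
            simp [hvl, hel]
          have hpos : ∀ x ∈ (e.drop i).map (· - v.getLast!), x ≠ 0 := by
            intro x hx
            obtain ⟨y, hy, rfl⟩ := List.mem_map.1 hx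
            have := hdropmem y hy
            omega
          rw [zip_pos _ _ _ hlenzip hpos, List.map_map]
          have hid : ∀ x ∈ e.drop i, ((fun b => v.getLast! + b) ∘ (· - v.getLast!)) x
              = id x := by
            intro x hx
            have := hdropmem x hx
            show v.getLast! + (x - v.getLast!) = x
            omega
          rw [List.map_congr_left hid, List.map_id]
        rw [hpart1, hpart2]
        rw [show (0:ℕ) :: e = (0:ℕ) :: (e.take i ++ e.drop i) by rw [List.take_append_drop]]
        rfl
  rcases hcase with rfl | hmem
  · exact Or.inl rfl
  · obtain ⟨hlen, hnd, hcase2⟩ := hmem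
    rcases hcase2 with hhead | ⟨i, hi1, hik, htake, hbig⟩
    · rcases Nat.eq_zero_or_pos k with hk0 | hk
      · left
        have h1 : e = [] := List.length_eq_zero_iff.1 (by omega)
        have h2 : v = [] := List.length_eq_zero_iff.1 (by omega)
        rw [h1, h2]
      · right
        refine ⟨0, hk, by simp, ?_⟩
        intro j h0 hj
        have hene : e ≠ [] := by
          intro h2; rw [h2] at hel; simp at hel; omega
        have hh : e.getD 0 0 = e.headI := by
          cases e with
          | nil => exact absurd rfl hene
          | cons a t => rfl
        calc v.getLast! < e.getD 0 0 := by rw [hh]; exact hhead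
        _ ≤ e.getD j 0 := nondec_getD_mono he (by omega) (by omega)
    · rcases eq_or_lt_of_le hik with heq | hlt
      · left
        have h1 : e.take i = e := by rw [heq, ← hlen, List.take_length]
        have h2 : v.take i = v := by rw [heq, List.take_length]
        rw [← h1, htake, h2]
      · right
        refine ⟨i, by omega, htake, ?_⟩
        intro j hij hj
        have h2 := hbig hlt
        calc v.getLast! < e.getD i 0 := h2
        _ ≤ e.getD j 0 := nondec_getD_mono he hij (by omega)

end ARhelp

/-- for `E ∈ AR^k` with `≺`-minimum `v` and `≺`-maximum `u`, there is
`F ∈ AR^{k+1}` containing `Φ(E) = {0⌢e : e ∈ E}`, whose `≺`-minimum is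
`Φ(v) = min_≺ Φ(E)` and whose `≺`-maximum is `Φ(u) = max_≺ Φ(E)`. -/
theorem AR_extend_cons_zero (k : ℕ) (E : Finset (List ℕ)) (hE : memAR k E)
    (v : List ℕ) (hvE : v ∈ E) (hmin : ∀ e ∈ E, e = v ∨ prec v e)
    (u : List ℕ) (huE : u ∈ E) (hmax : ∀ e ∈ E, e = u ∨ prec e u) :
    ∃ F : Finset (List ℕ), memAR (k + 1) F ∧
      (∀ e ∈ E, (0 :: e) ∈ F) ∧
      (∀ w ∈ F, w = 0 :: v ∨ prec (0 :: v) w) ∧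
      (∀ w ∈ F, w = 0 :: u ∨ prec w (0 :: u)) := by
  classical
  obtain ⟨X, hX, hrep, hinit⟩ := hE
  have hprops : ∀ e ∈ E, NonDec e ∧ e.length = k := by
    intro e he
    obtain ⟨t, ht, htl, rfl⟩ := hrep e he
    obtain ⟨h1, h2⟩ := hX.1 t ht (le_of_eq htl)
    exact ⟨h1, by rw [h2, htl]⟩
  obtain ⟨hvnd, hvl⟩ := hprops v hvE
  have hXz : X (List.replicate k 0) = v := by
    obtain ⟨t, ht, htl, hveq⟩ := hrep v hvE
    by_cases hz : t = List.replicate k 0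
    · rw [hveq, hz]
    · have hp : prec (List.replicate k 0) t := by
        have h2 := ARhelp.prec_replicate ht (by rw [htl]; exact hz)
        rwa [htl] at h2
      have hp2 : prec (X (List.replicate k 0)) v := by
        rw [hveq]
        exact (hX.2 _ _ (ARhelp.nondec_replicate k) ht (by simp) (le_of_eq htl)).1 hp
      have hmem : X (List.replicate k 0) ∈ E :=
        hinit _ (ARhelp.nondec_replicate k) (by simp) v hvE hp2
      rcases hmin _ hmem with h | h
      · exact h
      · exact (ARhelp.prec_asymm hp2 h).elim
  have hwnd : NonDec ((0:ℕ) :: v) := List.isChain_cons.2 ⟨fun y _ => Nat.zero_le y, hvnd⟩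
  have hwlen : ((0:ℕ) :: v).length = k + 1 := by simp [hvl]
  have htree : IsEkTree (k+1) (Xhat ((0:ℕ) :: v)) := ARhelp.isEkTree_xhat hwnd hwlen
  have hYrep : Xhat ((0:ℕ) :: v) (List.replicate (k+1) 0) = 0 :: v := by
    rw [ARhelp.Xhat_eq_xh, ARhelp.xh_replicate (by omega), ← hwlen, List.take_length]
  have hfin : {x : List ℕ | (∃ s, NonDec s ∧ s.length = k + 1 ∧ x = Xhat ((0:ℕ) :: v) s) ∧
      (x = 0 :: u ∨ prec x (0 :: u))}.Finite := by
    apply (ARhelp.finite_bdd (k+1) (((0:ℕ) :: u).getLast!)).subset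
    rintro x ⟨⟨s, hs, hsl, rfl⟩, hbd⟩
    have h1 := htree.1 s hs (le_of_eq hsl)
    refine ⟨by rw [h1.2, hsl], ?_⟩
    intro z hz
    have h2 : z ≤ (Xhat ((0:ℕ) :: v) s).getLast! := ARhelp.nondec_le_getLast! h1.1 hz
    have h3 : (Xhat ((0:ℕ) :: v) s).getLast! ≤ ((0:ℕ) :: u).getLast! := by
      rcases hbd with he | hp
      · rw [he]
      · rcases hp with ⟨h4, _⟩ | ⟨_, _, h6 | ⟨h7, _⟩⟩
        · rw [h4] at hz
          exact absurd hz List.not_mem_nil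
        · omega
        · omega
    omega
  refine ⟨hfin.toFinset, ⟨Xhat ((0:ℕ) :: v), htree, ?_, ?_⟩, ?_, ?_, ?_⟩
  · intro e he
    rw [Set.Finite.mem_toFinset] at he
    exact he.1
  · intro s hs hsl e he hp
    rw [Set.Finite.mem_toFinset] at he ⊢
    refine ⟨⟨s, hs, hsl, rfl⟩, Or.inr ?_⟩
    rcases he.2 with rfl | h2
    · exact hp
    · exact ARhelp.prec_trans hp h2
  · intro e he
    rw [Set.Finite.mem_toFinset]
    obtain ⟨hend, hel⟩ := hprops e he
    have himg : e = v ∨ e ∈ XmaxSet v := by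
      by_cases h : e = v
      · exact Or.inl h
      · obtain ⟨t, ht, htl, rfl⟩ := hrep e he
        exact Or.inr (ARhelp.mem_XmaxSet_of_tree hX hXz ht htl h)
    obtain ⟨s, hs, hsl, hes⟩ := ARhelp.exists_preimage hvnd hvl hend hel himg
    refine ⟨⟨s, hs, hsl, hes⟩, ?_⟩
    rcases hmax e he with rfl | h
    · exact Or.inl rfl
    · exact Or.inr (ARhelp.prec_cons_zero h)
  · intro x hx
    rw [Set.Finite.mem_toFinset] at hx
    obtain ⟨⟨s, hs, hsl, rfl⟩, _⟩ := hx
    by_cases hz : s = List.replicate (k+1) 0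
    · left
      rw [hz, hYrep]
    · right
      have hp : prec (List.replicate (k+1) 0) s := by
        have h2 := ARhelp.prec_replicate hs (by rw [hsl]; exact hz)
        rwa [hsl] at h2
      have h2 := (htree.2 _ _ (ARhelp.nondec_replicate (k+1)) hs (by simp)
        (le_of_eq hsl)).1 hp
      rwa [hYrep] at h2
  · intro x hx
    rw [Set.Finite.mem_toFinset] at hx
    exact hx.2
end
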